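/- Let k ≥ 3 and η ≠ 0 be a real number. Let F be a smooth real-valued function of (z₀,…,z_k) with ∂F/∂z_k nowhere vanishing. Let f₁₁ and f₃₁ be smooth functions of z₀ with (∂f₁₁/∂z₀)² + (∂f₃₁/∂z₀)² nowhere vanishing, let f₂₁ = η, let f₁₂ and f₃₂ be smooth functions of (z₀,…,z_{k−1}), let f₂₂ be a smooth function of (z₀,…,z_{k−2}), and assume Δ₁₂ := f₁₁f₂₂ − ηf₁₂ is nowhere vanishing. Assume the structure equations D_t f₁₁ − D_x f₁₂ = Δ₂₃, D_x f₂₂ = Δ₁₃, and D_t f₃₁ − D_x f₃₂ = −Δ₁₂ hold identically in the jet variables, where Δ₁₃ = f₁₁f₃₂ − f₃₁f₁₂ and Δ₂₃ = ηf₃₂ − f₃₁f₂₂. Suppose l ≥ 0 is finite and a, b, c are smooth real-valued functions of (x, t, z₀,…,z_l) that satisfy identically the Gauss equation ac − b² = −1 and the Codazzi equations f₁₁D_t a + ηD_t b − f₁₂D_x a − f₂₂D_x b − 2bΔ₁₃ + (a−c)Δ₂₃ = 0 and f₁₁D_t b + ηD_t c − f₁₂D_x b − f₂₂D_x c + (a−c)Δ₁₃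 + 2bΔ₂₃ = 0. Then ∂a/∂z_i = ∂b/∂z_i = ∂c/∂z_i = 0 for all 0 ≤ i ≤ l; that is, a, b and c are universal functions of x and t only. -/

import Mathlib

open scoped BigOperators

/-- A jet function: a function of `x`, `t` and the jet variables `z 0, z 1, …`,
where `z i` represents the derivative `∂^i u / ∂x^i`. -/
abbrev JetFun : Type := ℝ → ℝ → (ℕ → ℝ) → ℝ

/-- Partial derivative of a jet function with respect to `x`. -/
noncomputable def pX (f : JetFun) : JetFun := fun x t z => deriv (fun s => f s t z) x

/-- Partial derivative of a jet function with respect to `t`. -/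
noncomputable def pT (f : JetFun) : JetFun := fun x t z => deriv (fun s => f x s z) t

/-- Partial derivative of a jet function with respect to the jet variable `z i`. -/
noncomputable def pZ (i : ℕ) (f : JetFun) : JetFun :=
  fun x t z => deriv (fun s => f x t (Function.update z i s)) (z i)

/-- The total `x`-derivative `D_x = ∂_x + ∑_{i ≥ 0} z_{i+1} ∂_{z_i}`. -/
noncomputable def DX (f : JetFun) : JetFun :=
  fun x t z => pX f x t z + ∑' i : ℕ, z (i + 1) * pZ i f x t z

/-- The total `t`-derivative `D_t = ∂_t + ∑_{i ≥ 0} (D_x^i F) ∂_{z_i}` associated with the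
evolution equation `u_t = F`. -/
noncomputable def DT (F : JetFun) (f : JetFun) : JetFun :=
  fun x t z => pT f x t z + ∑' i : ℕ, (DX^[i] F) x t z * pZ i f x t z

/-- `f` is a smooth function of `(x, t, z 0, …, z m)` only. -/
def SmoothJet (m : ℕ) (f : JetFun) : Prop :=
  ∃ g : ℝ × ℝ × (Fin (m + 1) → ℝ) → ℝ, ContDiff ℝ (⊤ : ℕ∞) g ∧
    ∀ x t z, f x t z = g (x, t, fun i : Fin (m + 1) => z i.1)

/-- `f` is a smooth function of the jet variables `(z 0, …, z m)` only. -/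
def SmoothZ (m : ℕ) (f : JetFun) : Prop :=
  ∃ g : (Fin (m + 1) → ℝ) → ℝ, ContDiff ℝ (⊤ : ℕ∞) g ∧
    ∀ x t z, f x t z = g (fun i : Fin (m + 1) => z i.1)

namespace Jet

lemma smoothTop_le1 : (1 : WithTop ℕ∞) ≤ ((⊤:ℕ∞) : WithTop ℕ∞) := by exact_mod_cast le_top

lemma smoothTop_succ : ((⊤:ℕ∞) : WithTop ℕ∞) + 1 ≤ ((⊤:ℕ∞) : WithTop ℕ∞) := by norm_num

/-- restriction of a jet to the first m+1 coordinates -/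
def res (m : ℕ) (z : ℕ → ℝ) : Fin (m + 1) → ℝ := fun i => z i.1

/-- index as Fin -/
def fin' (m i : ℕ) (hi : i ≤ m) : Fin (m + 1) := ⟨i, Nat.lt_succ_of_le hi⟩

lemma res_update_le {m i : ℕ} (hi : i ≤ m) (z : ℕ → ℝ) (s : ℝ) :
    res m (Function.update z i s) = Function.update (res m z) (fin' m i hi) s := by
  funext q
  rcases eq_or_ne q (fin' m i hi) with h | h
  · subst h; simp [res, fin']
  · have hq : (q : ℕ) ≠ i := by
      intro hqi; exact h (Fin.ext hqi)
    simp [res, Function.update_of_ne hq, Function.update_of_ne h]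

lemma res_update_gt {m i : ℕ} (hi : m < i) (z : ℕ → ℝ) (s : ℝ) :
    res m (Function.update z i s) = res m z := by
  funext q
  have hq : (q : ℕ) ≠ i := by
    have := q.isLt; omega
  simp [res, Function.update_of_ne hq]

/-- `f` only depends on `x,t,z 0,…,z m`. -/
def Cyl (m : ℕ) (f : JetFun) : Prop :=
  ∀ x t z z', (∀ i, i ≤ m → z i = z' i) → f x t z = f x t z'

lemma cyl_of_smoothJet {m : ℕ} {f : JetFun} (h : SmoothJet m f) : Cyl m f := by
  obtain ⟨g, _, hfg⟩ := h
  intro x t z z' hzz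
  rw [hfg, hfg]
  have : (fun i : Fin (m+1) => z i.1) = fun i : Fin (m+1) => z' i.1 := by
    funext q
    exact hzz q (Nat.lt_succ_iff.mp q.isLt)
  rw [this]

lemma cyl_update_high {m j : ℕ} {f : JetFun} (h : Cyl m f) (hj : m < j)
    (x t : ℝ) (z : ℕ → ℝ) (s : ℝ) : f x t (Function.update z j s) = f x t z := by
  apply h
  intro i hi
  exact Function.update_of_ne (by omega) _ _

lemma smoothJet_of_smoothZ {m : ℕ} {f : JetFun} (h : SmoothZ m f) : SmoothJet m f := by
  obtain ⟨g, hg, hfg⟩ := h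
  exact ⟨fun p => g p.2.2, hg.comp (contDiff_snd.comp contDiff_snd), fun x t z => hfg x t z⟩

/-- `f` does not depend on x,t -/
def XTInv (f : JetFun) : Prop := ∀ x t x' t' z, f x t z = f x' t' z

lemma xtInv_of_smoothZ {m : ℕ} {f : JetFun} (h : SmoothZ m f) : XTInv f := by
  obtain ⟨g, _, hfg⟩ := h
  intro x t x' t' z; rw [hfg, hfg]

lemma xtInv_pZ {f : JetFun} (h : XTInv f) (i : ℕ) : XTInv (pZ i f) := by
  intro x t x' t' z
  show deriv _ _ = deriv _ _
  congr 1
  funext s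
  exact h _ _ _ _ _

lemma xtInv_pX {f : JetFun} (h : XTInv f) : ∀ x t z, pX f x t z = 0 := by
  intro x t z
  show deriv _ _ = 0
  have : (fun s => f s t z) = fun _ => f x t z := by
    funext s; exact h _ _ _ _ _
  rw [this, deriv_const]

lemma xtInv_pT {f : JetFun} (h : XTInv f) : ∀ x t z, pT f x t z = 0 := by
  intro x t z
  show deriv _ _ = 0
  have : (fun s => f x s z) = fun _ => f x t z := by
    funext s; exact h _ _ _ _ _
  rw [this, deriv_const]

/-- direction vector in the model space -/
noncomputable def dirZ (m i : ℕ) (hi : i ≤ m) : ℝ × ℝ × (Fin (m + 1) → ℝ) :=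
  (0, 0, Pi.single (fin' m i hi) 1)

lemma update_as_line {m i : ℕ} (hi : i ≤ m) (v : Fin (m+1) → ℝ) (s : ℝ) :
    Function.update v (fin' m i hi) s
      = v + (s - v (fin' m i hi)) • (Pi.single (fin' m i hi) 1 : Fin (m+1) → ℝ) := by
  funext q
  rcases eq_or_ne q (fin' m i hi) with h | h
  · subst h; simp
  · simp [Function.update_of_ne h, Pi.single_apply, h]

/-- the slice curve has derivative `dirZ` -/
lemma hasDerivAt_curve {m i : ℕ} (hi : i ≤ m) (x t : ℝ) (v : Fin (m+1) → ℝ) (s₀ : ℝ) :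
    HasDerivAt (fun s : ℝ => ((x, t, Function.update v (fin' m i hi) s) :
        ℝ × ℝ × (Fin (m + 1) → ℝ)))
      (dirZ m i hi) s₀ := by
  have h1 : HasDerivAt (fun s : ℝ => Function.update v (fin' m i hi) s)
      (Pi.single (fin' m i hi) (1:ℝ)) s₀ := by
    have h2 : HasDerivAt (fun s : ℝ =>
        v + (s - v (fin' m i hi)) • (Pi.single (fin' m i hi) 1 : Fin (m+1) → ℝ))
        ((1:ℝ) • (Pi.single (fin' m i hi) 1 : Fin (m+1) → ℝ)) s₀ :=
      (((hasDerivAt_id s₀).sub_const _).smul_const _).const_add _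
    rw [one_smul] at h2
    convert h2 using 1
    funext s
    exact update_as_line hi v s
  exact (hasDerivAt_const s₀ x).prodMk ((hasDerivAt_const s₀ t).prodMk h1)

section Rep

variable {m : ℕ} {f : JetFun} {g : ℝ × ℝ × (Fin (m + 1) → ℝ) → ℝ}

/-- value of pZ through the representative -/
lemma rep_hasDerivAt_slice (hg : ContDiff ℝ (⊤ : ℕ∞) g)
    (hfg : ∀ x t z, f x t z = g (x, t, res m z)) {i : ℕ} (hi : i ≤ m)
    (x t : ℝ) (z : ℕ → ℝ) (s₀ : ℝ) :
    HasDerivAt (fun s => f x t (Function.update z i s))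
      (fderiv ℝ g (x, t, res m (Function.update z i s₀)) (dirZ m i hi)) s₀ := by
  have hcur := hasDerivAt_curve hi x t (res m z) s₀
  have hdg : HasFDerivAt g
      (fderiv ℝ g (x, t, Function.update (res m z) (fin' m i hi) s₀))
      (x, t, Function.update (res m z) (fin' m i hi) s₀) :=
    ((hg.differentiable (by simp)) _).hasFDerivAt
  have hcomp := hdg.comp_hasDerivAt s₀ hcur
  have heq : (g ∘ fun s : ℝ => ((x, t, Function.update (res m z) (fin' m i hi) s) :
      ℝ × ℝ × (Fin (m + 1) → ℝ))) = fun s => f x t (Function.update z i s) := by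
    funext s
    simp only [Function.comp]
    rw [hfg, res_update_le hi]
  rw [heq] at hcomp
  rw [res_update_le hi]
  exact hcomp

lemma rep_pZ (hg : ContDiff ℝ (⊤ : ℕ∞) g)
    (hfg : ∀ x t z, f x t z = g (x, t, res m z)) {i : ℕ} (hi : i ≤ m)
    (x t : ℝ) (z : ℕ → ℝ) :
    pZ i f x t z = fderiv ℝ g (x, t, res m z) (dirZ m i hi) := by
  have h := rep_hasDerivAt_slice hg hfg hi x t z (z i)
  rw [Function.update_eq_self] at h
  exact h.deriv

end Rep

lemma pZ_high {m : ℕ} {f : JetFun} (h : Cyl m f) {i : ℕ} (hi : m < i)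
    (x t : ℝ) (z : ℕ → ℝ) : pZ i f x t z = 0 := by
  show deriv _ _ = 0
  have hconst : (fun s => f x t (Function.update z i s)) = fun _ => f x t z := by
    funext s
    exact cyl_update_high h hi x t z s
  rw [hconst, deriv_const]

/-- slice differentiability / HasDerivAt with pZ value : the workhorse -/
lemma sj_hasDerivAt_slice {m : ℕ} {f : JetFun} (h : SmoothJet m f)
    (i : ℕ) (x t : ℝ) (z : ℕ → ℝ) :
    HasDerivAt (fun s => f x t (Function.update z i s)) (pZ i f x t z) (z i) := by
  by_cases hi : i ≤ m
  · obtain ⟨g, hg, hfg⟩ := h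
    have hd := rep_hasDerivAt_slice hg hfg hi x t z (z i)
    rw [Function.update_eq_self] at hd
    rwa [rep_pZ hg hfg hi]
  · push_neg at hi
    have hconst : (fun s => f x t (Function.update z i s)) = fun _ => f x t z := by
      funext s
      exact cyl_update_high (cyl_of_smoothJet h) hi x t z s
    have h0 : pZ i f x t z = 0 := pZ_high (cyl_of_smoothJet h) hi x t z
    rw [h0, hconst]
    exact hasDerivAt_const _ _

/-- pZ of a SmoothJet function is SmoothJet -/
lemma sj_pZ {m : ℕ} {f : JetFun} (h : SmoothJet m f) (i : ℕ) :
    SmoothJet m (pZ i f) := by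
  by_cases hi : i ≤ m
  · obtain ⟨g, hg, hfg⟩ := h
    refine ⟨fun p => fderiv ℝ g p (dirZ m i hi), ?_, ?_⟩
    · exact (hg.fderiv_right smoothTop_succ).clm_apply contDiff_const
    · intro x t z
      exact rep_pZ hg hfg hi x t z
  · push_neg at hi
    refine ⟨fun _ => 0, contDiff_const, ?_⟩
    intro x t z
    exact pZ_high (cyl_of_smoothJet h) hi x t z


section RepX
variable {m : ℕ} {f : JetFun} {g : ℝ × ℝ × (Fin (m + 1) → ℝ) → ℝ}

noncomputable def dirX (m : ℕ) : ℝ × ℝ × (Fin (m + 1) → ℝ) := (1, 0, 0)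

lemma rep_pX (hg : ContDiff ℝ (⊤ : ℕ∞) g)
    (hfg : ∀ x t z, f x t z = g (x, t, res m z)) (x t : ℝ) (z : ℕ → ℝ) :
    pX f x t z = fderiv ℝ g (x, t, res m z) (dirX m) := by
  have hcur : HasDerivAt (fun s : ℝ => ((s, t, res m z) : ℝ × ℝ × (Fin (m+1) → ℝ)))
      (dirX m) x := (hasDerivAt_id x).prodMk ((hasDerivAt_const x t).prodMk (hasDerivAt_const x _))
  have hdg : HasFDerivAt g (fderiv ℝ g (x, t, res m z)) (x, t, res m z) :=
    ((hg.differentiable (by simp)) _).hasFDerivAt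
  have hcomp := hdg.comp_hasDerivAt x hcur
  have heq : (g ∘ fun s : ℝ => ((s, t, res m z) : ℝ × ℝ × (Fin (m+1) → ℝ)))
      = fun s => f s t z := by
    funext s; simp only [Function.comp]; rw [hfg]
  rw [heq] at hcomp
  exact hcomp.deriv

lemma sj_pX {f : JetFun} {m : ℕ} (h : SmoothJet m f) : SmoothJet m (pX f) := by
  obtain ⟨g, hg, hfg⟩ := h
  refine ⟨fun p => fderiv ℝ g p (dirX m), (hg.fderiv_right smoothTop_succ).clm_apply contDiff_const, ?_⟩
  intro x t z
  exact rep_pX hg hfg x t z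

end RepX

section Schwarz

variable {m : ℕ} {f : JetFun}

private lemma fderiv_dir_apply {g : ℝ × ℝ × (Fin (m + 1) → ℝ) → ℝ}
    (hg : ContDiff ℝ (⊤ : ℕ∞) g) (p v w : ℝ × ℝ × (Fin (m + 1) → ℝ)) :
    fderiv ℝ (fun q => fderiv ℝ g q v) p w = fderiv ℝ (fderiv ℝ g) p w v := by
  have hc : DifferentiableAt ℝ (fderiv ℝ g) p :=
    ((hg.fderiv_right smoothTop_succ).differentiable (by simp)) p
  have := fderiv_clm_apply hc (differentiableAt_const v)
  rw [this]
  simp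

private lemma fderiv2_symm {g : ℝ × ℝ × (Fin (m + 1) → ℝ) → ℝ}
    (hg : ContDiff ℝ (⊤ : ℕ∞) g) (p v w : ℝ × ℝ × (Fin (m + 1) → ℝ)) :
    fderiv ℝ (fderiv ℝ g) p v w = fderiv ℝ (fderiv ℝ g) p w v := by
  have hy : ∀ y, HasFDerivAt g (fderiv ℝ g y) y := fun y =>
    ((hg.differentiable (by simp)) y).hasFDerivAt
  have hp : HasFDerivAt (fderiv ℝ g) (fderiv ℝ (fderiv ℝ g) p) p :=
    (((hg.fderiv_right smoothTop_succ).differentiable (by simp)) p).hasFDerivAt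
  exact second_derivative_symmetric hy hp v w

lemma pZ_of_zero_fn {h : JetFun} (hz : ∀ x t z, h x t z = 0) (i : ℕ) :
    ∀ x t z, pZ i h x t z = 0 := by
  intro x t z
  show deriv _ _ = 0
  have : (fun s => h x t (Function.update z i s)) = fun _ => (0:ℝ) := by
    funext s; exact hz _ _ _
  rw [this, deriv_const]

lemma pX_of_zero_fn {h : JetFun} (hz : ∀ x t z, h x t z = 0) :
    ∀ x t z, pX h x t z = 0 := by
  intro x t z
  show deriv _ _ = 0
  have : (fun s => h s t z) = fun _ => (0:ℝ) := by
    funext s; exact hz _ _ _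
  rw [this, deriv_const]

lemma sj_pZ_pZ_comm (h : SmoothJet m f) (i j : ℕ) (x t : ℝ) (z : ℕ → ℝ) :
    pZ i (pZ j f) x t z = pZ j (pZ i f) x t z := by
  by_cases hj : j ≤ m
  · by_cases hi : i ≤ m
    · obtain ⟨g, hg, hfg⟩ := h
      have hrepj : ∀ x t z, pZ j f x t z = (fun p => fderiv ℝ g p (dirZ m j hj)) (x, t, res m z) :=
        fun x t z => rep_pZ hg hfg hj x t z
      have hrepi : ∀ x t z, pZ i f x t z = (fun p => fderiv ℝ g p (dirZ m i hi)) (x, t, res m z) :=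
        fun x t z => rep_pZ hg hfg hi x t z
      have hcj : ContDiff ℝ (⊤ : ℕ∞) (fun p => fderiv ℝ g p (dirZ m j hj)) :=
        (hg.fderiv_right smoothTop_succ).clm_apply contDiff_const
      have hci : ContDiff ℝ (⊤ : ℕ∞) (fun p => fderiv ℝ g p (dirZ m i hi)) :=
        (hg.fderiv_right smoothTop_succ).clm_apply contDiff_const
      rw [rep_pZ hcj hrepj hi x t z, rep_pZ hci hrepi hj x t z]
      rw [fderiv_dir_apply hg _ _ _, fderiv_dir_apply hg _ _ _]
      exact fderiv2_symm hg _ _ _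
    · push_neg at hi
      have h1 : ∀ x t z, pZ i f x t z = 0 := fun x t z => pZ_high (cyl_of_smoothJet h) hi x t z
      rw [pZ_of_zero_fn h1 j x t z]
      exact pZ_high (cyl_of_smoothJet (sj_pZ h j)) hi x t z
  · push_neg at hj
    have h1 : ∀ x t z, pZ j f x t z = 0 := fun x t z => pZ_high (cyl_of_smoothJet h) hj x t z
    rw [pZ_of_zero_fn h1 i x t z]
    exact (pZ_high (cyl_of_smoothJet (sj_pZ h i)) hj x t z).symm

lemma sj_pX_pZ_comm (h : SmoothJet m f) (j : ℕ) (x t : ℝ) (z : ℕ → ℝ) :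
    pZ j (pX f) x t z = pX (pZ j f) x t z := by
  by_cases hj : j ≤ m
  · obtain ⟨g, hg, hfg⟩ := h
    have hrepX : ∀ x t z, pX f x t z = (fun p => fderiv ℝ g p (dirX m)) (x, t, res m z) :=
      fun x t z => rep_pX hg hfg x t z
    have hrepj : ∀ x t z, pZ j f x t z = (fun p => fderiv ℝ g p (dirZ m j hj)) (x, t, res m z) :=
      fun x t z => rep_pZ hg hfg hj x t z
    have hcX : ContDiff ℝ (⊤ : ℕ∞) (fun p => fderiv ℝ g p (dirX m)) :=
      (hg.fderiv_right smoothTop_succ).clm_apply contDiff_const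
    have hcj : ContDiff ℝ (⊤ : ℕ∞) (fun p => fderiv ℝ g p (dirZ m j hj)) :=
      (hg.fderiv_right smoothTop_succ).clm_apply contDiff_const
    rw [rep_pZ hcX hrepX hj x t z, rep_pX hcj hrepj x t z]
    rw [fderiv_dir_apply hg _ _ _, fderiv_dir_apply hg _ _ _]
    exact fderiv2_symm hg _ _ _
  · push_neg at hj
    have h1 : ∀ x t z, pZ j f x t z = 0 := fun x t z => pZ_high (cyl_of_smoothJet h) hj x t z
    rw [pZ_high (cyl_of_smoothJet (sj_pX h)) hj x t z]
    exact (pX_of_zero_fn h1 x t z).symm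

end Schwarz


/-! ### pointwise algebra of pZ, closure lemmas -/

section Algebra

variable {m m' : ℕ} {f g : JetFun}

lemma sj_const (m : ℕ) (c : ℝ) : SmoothJet m (fun _ _ _ => c) :=
  ⟨fun _ => c, contDiff_const, fun _ _ _ => rfl⟩

lemma sj_add (hf : SmoothJet m f) (hg : SmoothJet m g) :
    SmoothJet m (fun x t z => f x t z + g x t z) := by
  obtain ⟨gf, hgf, hf1⟩ := hf
  obtain ⟨gg, hgg, hg1⟩ := hg
  exact ⟨fun p => gf p + gg p, hgf.add hgg, fun x t z => by
    show f x t z + g x t z = _; rw [hf1, hg1]⟩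

lemma sj_mul (hf : SmoothJet m f) (hg : SmoothJet m g) :
    SmoothJet m (fun x t z => f x t z * g x t z) := by
  obtain ⟨gf, hgf, hf1⟩ := hf
  obtain ⟨gg, hgg, hg1⟩ := hg
  exact ⟨fun p => gf p * gg p, hgf.mul hgg, fun x t z => by
    show f x t z * g x t z = _; rw [hf1, hg1]⟩

lemma sj_neg (hf : SmoothJet m f) : SmoothJet m (fun x t z => -(f x t z)) := by
  obtain ⟨gf, hgf, hf1⟩ := hf
  exact ⟨fun p => -(gf p), hgf.neg, fun x t z => by
    show -(f x t z) = _; rw [hf1]⟩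

lemma sj_sub (hf : SmoothJet m f) (hg : SmoothJet m g) :
    SmoothJet m (fun x t z => f x t z - g x t z) := by
  obtain ⟨gf, hgf, hf1⟩ := hf
  obtain ⟨gg, hgg, hg1⟩ := hg
  exact ⟨fun p => gf p - gg p, hgf.sub hgg, fun x t z => by
    show f x t z - g x t z = _; rw [hf1, hg1]⟩

lemma sj_const_mul (c : ℝ) (hf : SmoothJet m f) :
    SmoothJet m (fun x t z => c * f x t z) := sj_mul (sj_const m c) hf

lemma sj_mono (hf : SmoothJet m f) (hmm : m ≤ m') : SmoothJet m' f := by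
  obtain ⟨gf, hgf, hf1⟩ := hf
  refine ⟨fun p => gf (p.1, p.2.1, fun q : Fin (m+1) => p.2.2 ⟨q.1, by omega⟩), ?_, ?_⟩
  · apply hgf.comp
    exact contDiff_fst.prodMk ((contDiff_fst.comp contDiff_snd).prodMk
      (contDiff_pi.mpr (fun q => (contDiff_apply ℝ ℝ _).comp (contDiff_snd.comp contDiff_snd))))
  · intro x t z
    exact hf1 x t z

/-- coordinate function -/
def coord (j : ℕ) : JetFun := fun _ _ z => z j

lemma sj_coord {j m : ℕ} (hj : j ≤ m) : SmoothJet m (coord j) :=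
  ⟨fun p => p.2.2 ⟨j, Nat.lt_succ_of_le hj⟩,
    (contDiff_apply ℝ ℝ _).comp (contDiff_snd.comp contDiff_snd), fun _ _ _ => rfl⟩

lemma xtInv_coord (j : ℕ) : XTInv (coord j) := fun _ _ _ _ _ => rfl

lemma hasDerivAt_slice_coord (j i : ℕ) (x t : ℝ) (z : ℕ → ℝ) :
    HasDerivAt (fun s => coord j x t (Function.update z i s))
      (if j = i then 1 else 0) (z i) := by
  by_cases h : j = i
  · subst h
    simp only [coord, if_pos rfl]
    have : (fun s => Function.update z j s j) = fun s => s := by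
      funext s; simp
    rw [this]
    exact hasDerivAt_id' (z j)
  · simp only [coord, if_neg h]
    have : (fun s => Function.update z i s j) = fun _ => z j := by
      funext s; exact Function.update_of_ne h _ _
    rw [this]
    exact hasDerivAt_const _ _

lemma pZ_coord (j i : ℕ) (x t : ℝ) (z : ℕ → ℝ) :
    pZ i (coord j) x t z = if j = i then 1 else 0 :=
  (hasDerivAt_slice_coord j i x t z).deriv

/-- Leibniz rules, pointwise -/
lemma pZ_mul (hf : SmoothJet m f) (hg : SmoothJet m' g) (i : ℕ) (x t : ℝ) (z : ℕ → ℝ) :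
    pZ i (fun x t z => f x t z * g x t z) x t z
      = pZ i f x t z * g x t z + f x t z * pZ i g x t z := by
  have h := (sj_hasDerivAt_slice hf i x t z).mul (sj_hasDerivAt_slice hg i x t z)
  rw [show g x t (Function.update z i (z i)) = g x t z by rw [Function.update_eq_self],
    show f x t (Function.update z i (z i)) = f x t z by rw [Function.update_eq_self]] at h
  exact h.deriv

lemma pZ_add (hf : SmoothJet m f) (hg : SmoothJet m' g) (i : ℕ) (x t : ℝ) (z : ℕ → ℝ) :
    pZ i (fun x t z => f x t z + g x t z) x t z = pZ i f x t z + pZ i g x t z :=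
  ((sj_hasDerivAt_slice hf i x t z).add (sj_hasDerivAt_slice hg i x t z)).deriv

lemma pZ_sub (hf : SmoothJet m f) (hg : SmoothJet m' g) (i : ℕ) (x t : ℝ) (z : ℕ → ℝ) :
    pZ i (fun x t z => f x t z - g x t z) x t z = pZ i f x t z - pZ i g x t z :=
  ((sj_hasDerivAt_slice hf i x t z).sub (sj_hasDerivAt_slice hg i x t z)).deriv

lemma pZ_const (c : ℝ) (i : ℕ) (x t : ℝ) (z : ℕ → ℝ) :
    pZ i (fun _ _ _ => c) x t z = 0 := by
  show deriv _ _ = 0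
  simp

lemma pZ_const_mul (c : ℝ) (hf : SmoothJet m f) (i : ℕ) (x t : ℝ) (z : ℕ → ℝ) :
    pZ i (fun x t z => c * f x t z) x t z = c * pZ i f x t z :=
  ((sj_hasDerivAt_slice hf i x t z).const_mul c).deriv

lemma sj_finsetSum {s : Finset ℕ} {G : ℕ → JetFun} (h : ∀ j ∈ s, SmoothJet m (G j)) :
    SmoothJet m (fun x t z => ∑ j ∈ s, G j x t z) := by
  classical
  induction s using Finset.cons_induction with
  | empty => simpa using sj_const m 0
  | cons j s' hj ih =>
      have h1 := h j (Finset.mem_cons_self j s')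
      have h2 := ih (fun q hq => h q (Finset.mem_cons_of_mem hq))
      have := sj_add h1 h2
      convert this using 1
      funext x t z
      rw [Finset.sum_cons]

lemma pZ_finsetSum {s : Finset ℕ} {G : ℕ → JetFun} (h : ∀ j ∈ s, SmoothJet m (G j))
    (i : ℕ) (x t : ℝ) (z : ℕ → ℝ) :
    pZ i (fun x t z => ∑ j ∈ s, G j x t z) x t z = ∑ j ∈ s, pZ i (G j) x t z := by
  have hd : HasDerivAt (fun σ => ∑ j ∈ s, G j x t (Function.update z i σ))
      (∑ j ∈ s, pZ i (G j) x t z) (z i) :=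
    HasDerivAt.fun_sum (fun j hj => sj_hasDerivAt_slice (h j hj) i x t z)
  exact hd.deriv

end Algebra

/-! ### finite forms of DX and DT -/

section TotalDerivs

variable {m : ℕ} {f F : JetFun}

lemma dx_eq_finsum (h : Cyl m f) (x t : ℝ) (z : ℕ → ℝ) :
    DX f x t z = pX f x t z + ∑ i ∈ Finset.range (m+1), z (i+1) * pZ i f x t z := by
  show pX f x t z + _ = _
  congr 1
  apply tsum_eq_sum
  intro b hb
  have hbm : m < b := by
    simp only [Finset.mem_range] at hb; omega
  rw [pZ_high h hbm, mul_zero]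

lemma dt_eq_finsum (h : Cyl m f) (F : JetFun) (x t : ℝ) (z : ℕ → ℝ) :
    DT F f x t z = pT f x t z
      + ∑ i ∈ Finset.range (m+1), (DX^[i] F) x t z * pZ i f x t z := by
  show pT f x t z + _ = _
  congr 1
  apply tsum_eq_sum
  intro b hb
  have hbm : m < b := by
    simp only [Finset.mem_range] at hb; omega
  rw [pZ_high h hbm, mul_zero]

/-- at a point whose positive coordinates vanish, DX has no z-part -/
lemma dx_eq_pX_of_tail_zero (hz : ∀ i, 1 ≤ i → z i = 0) (f : JetFun) (x t : ℝ) :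
    DX f x t z = pX f x t z := by
  show pX f x t z + _ = _
  have hzero : ∑' i : ℕ, z (i+1) * pZ i f x t z = 0 := by
    have : ∀ i : ℕ, z (i+1) * pZ i f x t z = 0 := by
      intro i
      rw [hz (i+1) (by omega), zero_mul]
    rw [tsum_congr this, tsum_zero]
  rw [hzero]
  ring

end TotalDerivs

/-! ### local-constancy derivative helpers -/

lemma deriv_local_const {u : ℝ → ℝ} {σ C : ℝ} {I : Set ℝ} (hI : IsOpen I) (hσ : σ ∈ I)
    (h : ∀ s ∈ I, u s = C) : deriv u σ = 0 := by
  have hev : u =ᶠ[nhds σ] (fun _ => C) := by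
    filter_upwards [hI.mem_nhds hσ] with s hs
    exact h s hs
  rw [hev.deriv_eq, deriv_const]

/-- continuity: nonvanishing on a box -/
lemma sj_ne_zero_box {m : ℕ} {f : JetFun} (h : SmoothJet m f) (x0 t0 : ℝ) (z0 : ℕ → ℝ)
    (hne : f x0 t0 z0 ≠ 0) :
    ∃ δ > 0, ∀ x t z, |x - x0| < δ → |t - t0| < δ → (∀ i ≤ m, |z i - z0 i| < δ) →
      f x t z ≠ 0 := by
  obtain ⟨g, hg, hfg0⟩ := h
  have hfg : ∀ x t z, f x t z = g (x, t, res m z) := hfg0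
  set p0 : ℝ × ℝ × (Fin (m+1) → ℝ) := (x0, t0, res m z0) with hp0
  have hgp0 : g p0 ≠ 0 := by rw [← hfg]; exact hne
  have hcont : ContinuousAt g p0 := (hg.continuous).continuousAt
  have hpos : 0 < |g p0| / 2 := by positivity
  obtain ⟨δ, hδpos, hδ⟩ := Metric.continuousAt_iff.mp hcont (|g p0| / 2) hpos
  refine ⟨δ, hδpos, ?_⟩
  intro x t z hx ht hzs
  have hdist : dist ((x, t, res m z) : ℝ × ℝ × (Fin (m+1) → ℝ)) p0 < δ := by
    rw [Prod.dist_eq]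
    apply max_lt
    · rwa [Real.dist_eq]
    · rw [Prod.dist_eq]
      apply max_lt
      · rwa [Real.dist_eq]
      · rw [dist_pi_lt_iff hδpos]
        intro q
        rw [Real.dist_eq]
        exact hzs q.1 (Nat.lt_succ_iff.mp q.isLt)
  have := hδ hdist
  rw [Real.dist_eq] at this
  intro hzero
  have hzero' : g ((x, t, res m z) : ℝ × ℝ × (Fin (m+1) → ℝ)) = 0 := by
    rw [← hfg]; exact hzero
  rw [hzero'] at this
  simp only [zero_sub, abs_neg] at this
  linarith [abs_nonneg (g p0), this]

/-- no sign jump for a continuous function whose square is constant -/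
lemma sq_const_path {u : ℝ → ℝ} {η : ℝ} (hu : Continuous u)
    (h : ∀ τ ∈ Set.Icc (0:ℝ) 1, u τ ^ 2 = η ^ 2) (hη : η ≠ 0) : u 1 = u 0 := by
  by_contra hne
  have h0 := h 0 (by constructor <;> norm_num)
  have h1 := h 1 (by constructor <;> norm_num)
  have hfac : (u 1 - u 0) * (u 1 + u 0) = 0 := by nlinarith
  have hsum : u 1 + u 0 = 0 := by
    rcases mul_eq_zero.mp hfac with h' | h'
    · exact absurd (by linarith) hne
    · exact h'
  have hu0ne : u 0 ≠ 0 := by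
    intro h'
    rw [h'] at h0
    exact hη (by nlinarith)
  -- u 1 = -u 0, so 0 lies between u 0 and u 1
  have hmem : (0:ℝ) ∈ Set.uIcc (u 0) (u 1) := by
    rw [Set.mem_uIcc]
    rcases lt_or_gt_of_ne hu0ne with hneg | hpos
    · left
      constructor
      · linarith
      · nlinarith
    · right
      constructor
      · nlinarith
      · linarith
  have hivt := intermediate_value_uIcc (a := (0:ℝ)) (b := 1) (hu.continuousOn)
  obtain ⟨τ, hτ, huτ⟩ := hivt hmem
  have hτ' : τ ∈ Set.Icc (0:ℝ) 1 := by
    rwa [Set.uIcc_of_le (by norm_num : (0:ℝ) ≤ 1)] at hτ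
  have := h τ hτ'
  rw [huτ] at this
  exact hη (by nlinarith)


/-! ### SJX : smooth and (x,t)-independent -/

def SJX (m : ℕ) (f : JetFun) : Prop := SmoothJet m f ∧ XTInv f

lemma sjx_of_smoothZ {m : ℕ} {f : JetFun} (h : SmoothZ m f) : SJX m f :=
  ⟨smoothJet_of_smoothZ h, xtInv_of_smoothZ h⟩

lemma sj_congr {m : ℕ} {f f' : JetFun} (h : SmoothJet m f)
    (he : ∀ x t z, f' x t z = f x t z) : SmoothJet m f' := by
  obtain ⟨g, hg, hfg⟩ := h
  exact ⟨g, hg, fun x t z => by rw [he, hfg]⟩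

lemma dx_fun_eq {m : ℕ} {f : JetFun} (h : SJX m f) (x t : ℝ) (z : ℕ → ℝ) :
    DX f x t z = ∑ i ∈ Finset.range (m+1), z (i+1) * pZ i f x t z := by
  rw [dx_eq_finsum (cyl_of_smoothJet h.1) x t z, xtInv_pX h.2 x t z, zero_add]

lemma sjx_dx {m : ℕ} {f : JetFun} (h : SJX m f) : SJX (m+1) (DX f) := by
  constructor
  · apply sj_congr (f := fun x t z => ∑ i ∈ Finset.range (m+1), coord (i+1) x t z * pZ i f x t z)
    · apply sj_finsetSum
      intro j hj
      simp only [Finset.mem_range] at hj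
      exact sj_mul (sj_coord (by omega)) (sj_mono (sj_pZ h.1 j) (by omega))
    · intro x t z
      exact dx_fun_eq h x t z
  · intro x t x' t' z
    rw [dx_fun_eq h x t z, dx_fun_eq h x' t' z]
    apply Finset.sum_congr rfl
    intro j _
    rw [xtInv_pZ h.2 j x t x' t' z]

/-! ### structure of the iterates DX^[i] F -/

section Phi

variable {k : ℕ} {F : JetFun}

lemma phi_sjx (hF : SmoothZ k F) : ∀ i, SJX (k+i) (DX^[i] F) := by
  intro i
  induction i with
  | zero => simpa using sjx_of_smoothZ hF
  | succ n ih =>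
      rw [Function.iterate_succ_apply']
      have := sjx_dx ih
      rwa [show k + n + 1 = k + (n+1) by omega] at this

/-- simultaneous: top-derivative of Φ_i is pZ k F, and Φ_{i+1} is affine in its
top variable. -/
lemma phi_top_and_affine (hF : SmoothZ k F) : ∀ i,
    (∀ x t z, pZ (k+i) (DX^[i] F) x t z = pZ k F x t z) ∧
    (1 ≤ i → ∀ x t z s, (DX^[i] F) x t (Function.update z (k+i) s)
      = (DX^[i] F) x t z + (s - z (k+i)) * pZ k F x t z) := by
  intro i
  induction i with
  | zero => exact ⟨fun x t z => rfl, fun h => absurd h (by omega)⟩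
  | succ n ih =>
      have htop := ih.1
      -- affine property of Φ_{n+1}
      have haff : ∀ x t z s, (DX^[n+1] F) x t (Function.update z (k+(n+1)) s)
          = (DX^[n+1] F) x t z + (s - z (k+(n+1))) * pZ k F x t z := by
        intro x t z s
        have hsjx := phi_sjx hF n
        rw [Function.iterate_succ_apply']
        rw [dx_fun_eq hsjx x t _, dx_fun_eq hsjx x t z]
        have hcylpz : ∀ j, Cyl (k+n) (pZ j (DX^[n] F)) := fun j =>
          cyl_of_smoothJet (sj_pZ hsjx.1 j)
        have hpz_inv : ∀ j, pZ j (DX^[n] F) x t (Function.update z (k+(n+1)) s)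
            = pZ j (DX^[n] F) x t z := fun j =>
          cyl_update_high (hcylpz j) (by omega) x t z s
        have hterm : ∀ j ∈ Finset.range (k+n+1),
            (Function.update z (k+(n+1)) s) (j+1) * pZ j (DX^[n] F) x t (Function.update z (k+(n+1)) s)
            = z (j+1) * pZ j (DX^[n] F) x t z
              + (if j = k+n then (s - z (k+n+1)) * pZ j (DX^[n] F) x t z else 0) := by
          intro j hj
          rw [hpz_inv j]
          by_cases hjk : j = k + n
          · rw [if_pos hjk]
            have hup : (Function.update z (k+(n+1)) s) (j+1) = s := by
              have he : k + (n+1) = j + 1 := by omega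
              rw [he]
              exact Function.update_self _ _ _
            rw [hup, hjk]
            ring
          · rw [if_neg hjk]
            have : (Function.update z (k+(n+1)) s) (j+1) = z (j+1) := by
              apply Function.update_of_ne
              omega
            rw [this]
            ring
        rw [Finset.sum_congr rfl hterm, Finset.sum_add_distrib]
        have hsingle : ∑ j ∈ Finset.range (k+n+1),
            (if j = k+n then (s - z (k+n+1)) * pZ j (DX^[n] F) x t z else 0)
            = (s - z (k+n+1)) * pZ (k+n) (DX^[n] F) x t z := by
          rw [Finset.sum_eq_single_of_mem (k+n) (by simp)
            (fun b _ hb => if_neg hb), if_pos rfl]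
        rw [hsingle, htop x t z]
        rw [show k + (n+1) = k + n + 1 by omega]
      refine ⟨?_, fun _ => haff⟩
      intro x t z
      show deriv _ _ = _
      have hslice : (fun s => (DX^[n+1] F) x t (Function.update z (k+(n+1)) s))
          = fun s => (DX^[n+1] F) x t z + (s - z (k+(n+1))) * pZ k F x t z := by
        funext s
        exact haff x t z s
      rw [hslice]
      have h1 : HasDerivAt (fun s : ℝ => s - z (k+(n+1))) 1 (z (k+(n+1))) := by
        simpa using (hasDerivAt_id (z (k+(n+1)))).sub_const (z (k+(n+1)))
      have h2 : HasDerivAt (fun s : ℝ => (s - z (k+(n+1))) * pZ k F x t z)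
          (pZ k F x t z) (z (k+(n+1))) := by
        simpa using h1.mul_const (pZ k F x t z)
      exact (h2.const_add _).deriv

lemma phi_top (hF : SmoothZ k F) (i : ℕ) (x t : ℝ) (z : ℕ → ℝ) :
    pZ (k+i) (DX^[i] F) x t z = pZ k F x t z := (phi_top_and_affine hF i).1 x t z

lemma phi_affine (hF : SmoothZ k F) {i : ℕ} (hi : 1 ≤ i) (x t : ℝ) (z : ℕ → ℝ) (s : ℝ) :
    (DX^[i] F) x t (Function.update z (k+i) s)
      = (DX^[i] F) x t z + (s - z (k+i)) * pZ k F x t z :=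
  (phi_top_and_affine hF i).2 hi x t z s

end Phi


/-! ### t-slices -/

section RepT

variable {m : ℕ} {f : JetFun} {g : ℝ × ℝ × (Fin (m + 1) → ℝ) → ℝ}

noncomputable def dirT (m : ℕ) : ℝ × ℝ × (Fin (m + 1) → ℝ) := (0, 1, 0)

lemma rep_pT (hg : ContDiff ℝ (⊤ : ℕ∞) g)
    (hfg : ∀ x t z, f x t z = g (x, t, res m z)) (x t : ℝ) (z : ℕ → ℝ) (s₀ : ℝ) :
    HasDerivAt (fun s => f x s z) (fderiv ℝ g (x, s₀, res m z) (dirT m)) s₀ := by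
  have hcur : HasDerivAt (fun s : ℝ => ((x, s, res m z) : ℝ × ℝ × (Fin (m+1) → ℝ)))
      (dirT m) s₀ :=
    (hasDerivAt_const s₀ x).prodMk ((hasDerivAt_id s₀).prodMk (hasDerivAt_const s₀ _))
  have hdg : HasFDerivAt g (fderiv ℝ g (x, s₀, res m z)) (x, s₀, res m z) :=
    ((hg.differentiable (by simp)) _).hasFDerivAt
  have hcomp := hdg.comp_hasDerivAt s₀ hcur
  have heq : (g ∘ fun s : ℝ => ((x, s, res m z) : ℝ × ℝ × (Fin (m+1) → ℝ)))
      = fun s => f x s z := by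
    funext s; simp only [Function.comp]; rw [hfg]
  rw [heq] at hcomp
  exact hcomp

lemma sj_hasDerivAt_sliceT (h : SmoothJet m f) (x t : ℝ) (z : ℕ → ℝ) :
    HasDerivAt (fun s => f x s z) (pT f x t z) t := by
  obtain ⟨g, hg, hfg⟩ := h
  have hd := rep_pT hg hfg x t z t
  have : pT f x t z = fderiv ℝ g (x, t, res m z) (dirT m) := hd.deriv
  rwa [this]

lemma sj_hasDerivAt_sliceX (h : SmoothJet m f) (x t : ℝ) (z : ℕ → ℝ) :
    HasDerivAt (fun s => f s t z) (pX f x t z) x := by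
  obtain ⟨g, hg, hfg0⟩ := h
  have hfg : ∀ x t z, f x t z = g (x, t, res m z) := hfg0
  have hcur : HasDerivAt (fun s : ℝ => ((s, t, res m z) : ℝ × ℝ × (Fin (m+1) → ℝ)))
      (dirX m) x := (hasDerivAt_id x).prodMk ((hasDerivAt_const x t).prodMk (hasDerivAt_const x _))
  have hdg : HasFDerivAt g (fderiv ℝ g (x, t, res m z)) (x, t, res m z) :=
    ((hg.differentiable (by simp)) _).hasFDerivAt
  have hcomp := hdg.comp_hasDerivAt x hcur
  have heq : (g ∘ fun s : ℝ => ((s, t, res m z) : ℝ × ℝ × (Fin (m+1) → ℝ)))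
      = fun s => f s t z := by
    funext s; simp only [Function.comp]; rw [hfg]
  rw [heq] at hcomp
  have : pX f x t z = fderiv ℝ g (x, t, res m z) (dirX m) := rep_pX hg hfg x t z
  rwa [this]

end RepT

/-- a HasDerivAt whose function is locally constant has value 0 -/
lemma hasDerivAt_local_const_eq_zero {u : ℝ → ℝ} {v σ C : ℝ} {I : Set ℝ}
    (hI : IsOpen I) (hσ : σ ∈ I) (hu : HasDerivAt u v σ) (h : ∀ s ∈ I, u s = C) :
    v = 0 := by
  rw [← hu.deriv]
  exact deriv_local_const hI hσ h

/-- constancy along a z-direction when the pZ vanishes identically -/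
lemma const_of_pZ_zero {l j : ℕ} {a : JetFun} (ha : SmoothJet l a)
    (hj : ∀ x t z, pZ j a x t z = 0) (x t : ℝ) (z : ℕ → ℝ) (v : ℝ) :
    a x t (Function.update z j v) = a x t z := by
  have hdiff : ∀ s : ℝ, HasDerivAt (fun σ => a x t (Function.update z j σ)) 0 s := by
    intro s
    have h := sj_hasDerivAt_slice ha j x t (Function.update z j s)
    simp only [Function.update_idem, Function.update_self] at h
    rw [hj] at h
    exact h
  have hconst := is_const_of_deriv_eq_zero (fun s => (hdiff s).differentiableAt)
    (fun s => (hdiff s).deriv) v (z j)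
  calc a x t (Function.update z j v) = a x t (Function.update z j (z j)) := hconst
  _ = a x t z := by rw [Function.update_eq_self]

/-- reduction of the jet order when top derivatives vanish identically -/
lemma sj_reduce {l m : ℕ} {a : JetFun} (ha : SmoothJet l a) (hml : m ≤ l)
    (hvan : ∀ j, m < j → j ≤ l → ∀ x t z, pZ j a x t z = 0) : SmoothJet m a := by
  classical
  -- first: a is invariant under truncation above m
  have key : ∀ n, ∀ x t z, a x t z = a x t (fun i => if i < l + 1 - n ∨ i ≤ m then z i else 0) := by
    intro n
    induction n with
    | zero =>
        intro x t z
        apply cyl_of_smoothJet ha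
        intro i hi
        rw [if_pos (Or.inl (by omega))]
    | succ n ih =>
        intro x t z
        by_cases hstop : l + 1 - n ≤ m + 1
        · -- truncation index already at or below m+1 : sets agree
          rw [ih x t z]
          have : (fun i => if i < l + 1 - n ∨ i ≤ m then z i else 0)
              = (fun i => if i < l + 1 - (n+1) ∨ i ≤ m then z i else 0) := by
            funext i
            by_cases h1 : i < l + 1 - n ∨ i ≤ m
            · rw [if_pos h1]
              have h2 : i < l + 1 - (n+1) ∨ i ≤ m := by omega
              rw [if_pos h2]
            · rw [if_neg h1]
              have h2 : ¬(i < l + 1 - (n+1) ∨ i ≤ m) := by omega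
              rw [if_neg h2]
          rw [this]
        · push_neg at hstop
          set j := l - n with hjdef
          have hjm : m < j := by omega
          have hjl : j ≤ l := by omega
          rw [ih x t z]
          have hupd : (fun i => if i < l + 1 - (n+1) ∨ i ≤ m then z i else 0)
              = Function.update (fun i => if i < l + 1 - n ∨ i ≤ m then z i else 0) j 0 := by
            funext i
            by_cases hij : i = j
            · rw [hij, Function.update_self]
              have : ¬(j < l + 1 - (n+1) ∨ j ≤ m) := by omega
              rw [if_neg this]
            · rw [Function.update_of_ne hij]
              by_cases h1 : i < l + 1 - (n+1) ∨ i ≤ m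
              · rw [if_pos h1, if_pos (by omega)]
              · rw [if_neg h1]
                have : ¬(i < l + 1 - n ∨ i ≤ m) := by omega
                rw [if_neg this]
          rw [hupd, const_of_pZ_zero ha (hvan j hjm hjl) x t _ 0]
  have htrunc : ∀ x t z, a x t z = a x t (fun i => if i ≤ m then z i else 0) := by
    intro x t z
    have := key (l + 1) x t z
    simpa using this
  obtain ⟨g, hg, hfg⟩ := ha
  refine ⟨fun p => g (p.1, p.2.1, fun q : Fin (l+1) =>
      if h : q.1 ≤ m then p.2.2 ⟨q.1, by omega⟩ else 0), ?_, ?_⟩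
  · apply hg.comp
    refine contDiff_fst.prodMk ((contDiff_fst.comp contDiff_snd).prodMk ?_)
    apply contDiff_pi.mpr
    intro q
    by_cases h : q.1 ≤ m
    · simp only [dif_pos h]
      exact (contDiff_apply ℝ ℝ _).comp (contDiff_snd.comp contDiff_snd)
    · simp only [dif_neg h]
      exact contDiff_const
  · intro x t z
    rw [htrunc x t z, hfg]
    apply congrArg g
    refine congrArg (Prod.mk x) ?_
    refine congrArg (Prod.mk t) ?_
    funext q
    by_cases h : q.1 ≤ m
    · simp only [dif_pos h, if_pos h]
    · simp only [dif_neg h, if_neg h]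


lemma cyl_pT {m : ℕ} {f : JetFun} (h : Cyl m f) : Cyl m (pT f) := by
  intro x t z z' hzz
  show deriv _ _ = deriv _ _
  congr 1
  funext s
  exact h x s z z' hzz

lemma cyl_pX {m : ℕ} {f : JetFun} (h : Cyl m f) : Cyl m (pX f) := by
  intro x t z z' hzz
  show deriv _ _ = deriv _ _
  congr 1
  funext s
  exact h s t z z' hzz

lemma cyl_pZ {m : ℕ} {f : JetFun} (h : SmoothJet m f) (i : ℕ) : Cyl m (pZ i f) :=
  cyl_of_smoothJet (sj_pZ h i)

end Jet

namespace Main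

open Jet

section S

variable {k l : ℕ} {η : ℝ} {F f11 f31 f12 f22 f32 a b c : JetFun}

/-- the two cheap global facts coming from evaluating the structure equations at
points all of whose jet coordinates of positive index vanish :
`f31' ≠ 0` everywhere, and `f11 f11' = f31 f31'`. -/
lemma cheap (hk : 3 ≤ k) (hη : η ≠ 0)
    (hF : SmoothZ k F)
    (hf11 : SmoothZ 0 f11) (hf31 : SmoothZ 0 f31)
    (hf12 : SmoothZ (k - 1) f12) (hf32 : SmoothZ (k - 1) f32)
    (hf22 : SmoothZ (k - 2) f22)
    (hΔ12 : ∀ x t z, f11 x t z * f22 x t z - η * f12 x t z ≠ 0)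
    (hstruct1 : ∀ x t z, DT F f11 x t z - DX f12 x t z
      = η * f32 x t z - f31 x t z * f22 x t z)
    (hstruct2 : ∀ x t z, DX f22 x t z
      = f11 x t z * f32 x t z - f31 x t z * f12 x t z)
    (hstruct3 : ∀ x t z, DT F f31 x t z - DX f32 x t z
      = -(f11 x t z * f22 x t z - η * f12 x t z)) :
    (∀ x t z, pZ 0 f31 x t z ≠ 0) ∧
    (∀ x t z, f11 x t z * pZ 0 f11 x t z = f31 x t z * pZ 0 f31 x t z) := by
  have key : ∀ x t (z : ℕ → ℝ),
      pZ 0 f31 x t z ≠ 0 ∧ f11 x t z * pZ 0 f11 x t z = f31 x t z * pZ 0 f31 x t z := by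
    intro x t z
    set zs : ℕ → ℝ := fun i => if i = 0 then z 0 else 0 with hzs
    have hzs1 : ∀ i, 1 ≤ i → zs i = 0 := by
      intro i hi
      simp only [hzs, if_neg (by omega : ¬ i = 0)]
    have hagree : ∀ i, i ≤ 0 → z i = zs i := by
      intro i hi
      have : i = 0 := by omega
      simp [this, hzs]
    -- DX of the f's vanishes at zs
    have hDXf12 : DX f12 x t zs = 0 := by
      rw [dx_eq_pX_of_tail_zero hzs1, xtInv_pX (xtInv_of_smoothZ hf12)]
    have hDXf22 : DX f22 x t zs = 0 := by
      rw [dx_eq_pX_of_tail_zero hzs1, xtInv_pX (xtInv_of_smoothZ hf22)]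
    have hDXf32 : DX f32 x t zs = 0 := by
      rw [dx_eq_pX_of_tail_zero hzs1, xtInv_pX (xtInv_of_smoothZ hf32)]
    -- DT of f11, f31 at zs
    have hDT : ∀ (p : JetFun), SmoothZ 0 p →
        DT F p x t zs = F x t zs * pZ 0 p x t zs := by
      intro p hp
      rw [dt_eq_finsum (cyl_of_smoothJet (smoothJet_of_smoothZ hp)) F x t zs]
      rw [xtInv_pT (xtInv_of_smoothZ hp)]
      rw [Finset.sum_range_one]
      simp
    have e3 := hstruct3 x t zs
    rw [hDT f31 hf31, hDXf32, sub_zero] at e3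
    have e1 := hstruct1 x t zs
    rw [hDT f11 hf11, hDXf12, sub_zero] at e1
    have e2 := hstruct2 x t zs
    rw [hDXf22] at e2
    have hD12 : f11 x t zs * f22 x t zs - η * f12 x t zs ≠ 0 := hΔ12 x t zs
    -- μ' ≠ 0 and F* ≠ 0 at zs
    have hmu' : pZ 0 f31 x t zs ≠ 0 := by
      intro h0
      rw [h0, mul_zero] at e3
      exact hD12 (by linarith)
    have hFs : F x t zs ≠ 0 := by
      intro h0
      rw [h0, zero_mul] at e3
      exact hD12 (by linarith)
    -- F2 at zs
    have hF2s : f11 x t zs * pZ 0 f11 x t zs = f31 x t zs * pZ 0 f31 x t zs := by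
      have hc : F x t zs * (f11 x t zs * pZ 0 f11 x t zs)
          = F x t zs * (f31 x t zs * pZ 0 f31 x t zs) := by
        linear_combination (f11 x t zs) * e1 - (f31 x t zs) * e3 - η * e2
      exact mul_left_cancel₀ hFs hc
    -- transfer from zs to z using cylindricity at order 0
    have t31 : pZ 0 f31 x t z = pZ 0 f31 x t zs :=
      cyl_pZ (smoothJet_of_smoothZ hf31) 0 x t z zs hagree
    have t11 : pZ 0 f11 x t z = pZ 0 f11 x t zs :=
      cyl_pZ (smoothJet_of_smoothZ hf11) 0 x t z zs hagree
    have v31 : f31 x t z = f31 x t zs :=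
      cyl_of_smoothJet (smoothJet_of_smoothZ hf31) x t z zs hagree
    have v11 : f11 x t z = f11 x t zs :=
      cyl_of_smoothJet (smoothJet_of_smoothZ hf11) x t z zs hagree
    rw [t31, t11, v31, v11]
    exact ⟨hmu', hF2s⟩
  exact ⟨fun x t z => (key x t z).1, fun x t z => (key x t z).2⟩

/-- derivative of the Gauss equation -/
lemma gauss_deriv (ha : SmoothJet l a) (hb : SmoothJet l b) (hc : SmoothJet l c)
    (hGauss : ∀ x t z, a x t z * c x t z - (b x t z) ^ 2 = -1) (j : ℕ) :
    ∀ x t z, pZ j a x t z * c x t z + a x t z * pZ j c x t z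
      - 2 * b x t z * pZ j b x t z = 0 := by
  intro x t z
  have hG0 : pZ j (fun x t z => a x t z * c x t z - b x t z * b x t z) x t z = 0 := by
    show deriv _ _ = 0
    have : (fun s => (fun x t z => a x t z * c x t z - b x t z * b x t z) x t
        (Function.update z j s)) = fun _ => (-1 : ℝ) := by
      funext s
      have := hGauss x t (Function.update z j s)
      simp only []
      nlinarith [this]
    rw [this, deriv_const]
  rw [pZ_sub (sj_mul ha hc) (sj_mul hb hb) j x t z,
    pZ_mul ha hc j x t z, pZ_mul hb hb j x t z] at hG0
  nlinarith [hG0]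

/-- the z_k-slice of F is injective (Rolle + nonvanishing derivative) -/
lemma F_slice_ne (hF : SmoothZ k F) (hFzk : ∀ x t z, pZ k F x t z ≠ 0)
    (x t : ℝ) (z : ℕ → ℝ) {s : ℝ} (hs : z k < s) :
    F x t (Function.update z k s) ≠ F x t z := by
  intro heq
  have hd : ∀ σ : ℝ, HasDerivAt (fun σ' => F x t (Function.update z k σ'))
      (pZ k F x t (Function.update z k σ)) σ := by
    intro σ
    have h := sj_hasDerivAt_slice (smoothJet_of_smoothZ hF) k x t (Function.update z k σ)
    simp only [Function.update_idem, Function.update_self] at h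
    exact h
  have hcont : ContinuousOn (fun σ' => F x t (Function.update z k σ'))
      (Set.Icc (z k) s) := fun σ _ => ((hd σ).continuousAt).continuousWithinAt
  have hends : (fun σ' => F x t (Function.update z k σ')) (z k)
      = (fun σ' => F x t (Function.update z k σ')) s := by
    simp only [Function.update_eq_self]
    exact heq.symm
  obtain ⟨σ, _, hσ0⟩ := exists_hasDerivAt_eq_zero hs hcont hends (fun σ _ => hd σ)
  exact hFzk x t (Function.update z k σ) hσ0

/-- the band lemma : `f11 a_j + η b_j = 0` and `f11 b_j + η c_j = 0`
for `l + 2 - k ≤ j ≤ l`. -/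
lemma band (hk : 3 ≤ k) (hη : η ≠ 0)
    (hF : SmoothZ k F) (hFzk : ∀ x t z, pZ k F x t z ≠ 0)
    (hf11 : SmoothZ 0 f11) (hf31 : SmoothZ 0 f31)
    (hf12 : SmoothZ (k - 1) f12) (hf32 : SmoothZ (k - 1) f32)
    (hf22 : SmoothZ (k - 2) f22)
    (ha : SmoothJet l a) (hb : SmoothJet l b) (hc : SmoothJet l c)
    (hCod1 : ∀ x t z,
      f11 x t z * DT F a x t z + η * DT F b x t z
        - f12 x t z * DX a x t z - f22 x t z * DX b x t z
        - 2 * b x t z * (f11 x t z * f32 x t z - f31 x t z * f12 x t z)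
        + (a x t z - c x t z) * (η * f32 x t z - f31 x t z * f22 x t z) = 0)
    (hCod2 : ∀ x t z,
      f11 x t z * DT F b x t z + η * DT F c x t z
        - f12 x t z * DX b x t z - f22 x t z * DX c x t z
        + (a x t z - c x t z) * (f11 x t z * f32 x t z - f31 x t z * f12 x t z)
        + 2 * b x t z * (η * f32 x t z - f31 x t z * f22 x t z) = 0) :
    ∀ j, l + 2 ≤ k + j → j ≤ l → ∀ x t z,
      f11 x t z * pZ j a x t z + η * pZ j b x t z = 0 ∧
      f11 x t z * pZ j b x t z + η * pZ j c x t z = 0 := by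
  suffices main : ∀ d j, l - j = d → l + 2 ≤ k + j → j ≤ l → ∀ x t z,
      f11 x t z * pZ j a x t z + η * pZ j b x t z = 0 ∧
      f11 x t z * pZ j b x t z + η * pZ j c x t z = 0 by
    exact fun j h1 h2 => main (l - j) j rfl h1 h2
  intro d
  induction d using Nat.strong_induction_on with
  | _ d IH =>
  intro j hd hkj hjl x t z
  have IH' : ∀ j', j < j' → j' ≤ l → ∀ x t z,
      f11 x t z * pZ j' a x t z + η * pZ j' b x t z = 0 ∧
      f11 x t z * pZ j' b x t z + η * pZ j' c x t z = 0 := by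
    intro j' h1 h2
    exact IH (l - j') (by omega) j' rfl (by omega) h2
  set m := k + j with hm
  set s : ℝ := z m + 1 with hsdef
  set u := Function.update z m s with hu
  have hlm : l < m := by omega
  have hagree : ∀ i, i ≤ l → u i = z i := by
    intro i hi
    exact Function.update_of_ne (by omega) _ _
  have hagree' : ∀ mp, mp < m → ∀ i, i ≤ mp → u i = z i := by
    intro mp hmp i hi
    exact Function.update_of_ne (by omega) _ _
  -- invariance of the various functions under the update
  have hinva : a x t u = a x t z := cyl_of_smoothJet ha x t u z hagree
  have hinvb : b x t u = b x t z := cyl_of_smoothJet hb x t u z hagree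
  have hinvc : c x t u = c x t z := cyl_of_smoothJet hc x t u z hagree
  have hinv11 : f11 x t u = f11 x t z :=
    cyl_of_smoothJet (smoothJet_of_smoothZ hf11) x t u z (hagree' 0 (by omega))
  have hinv31 : f31 x t u = f31 x t z :=
    cyl_of_smoothJet (smoothJet_of_smoothZ hf31) x t u z (hagree' 0 (by omega))
  have hinv12 : f12 x t u = f12 x t z :=
    cyl_of_smoothJet (smoothJet_of_smoothZ hf12) x t u z (hagree' (k-1) (by omega))
  have hinv32 : f32 x t u = f32 x t z :=
    cyl_of_smoothJet (smoothJet_of_smoothZ hf32) x t u z (hagree' (k-1) (by omega))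
  have hinv22 : f22 x t u = f22 x t z :=
    cyl_of_smoothJet (smoothJet_of_smoothZ hf22) x t u z (hagree' (k-2) (by omega))
  have hDXp : ∀ (p : JetFun), SmoothJet l p → DX p x t u = DX p x t z := by
    intro p hp
    rw [dx_eq_finsum (cyl_of_smoothJet hp) x t u, dx_eq_finsum (cyl_of_smoothJet hp) x t z]
    congr 1
    · exact cyl_pX (cyl_of_smoothJet hp) x t u z hagree
    · apply Finset.sum_congr rfl
      intro i hi
      simp only [Finset.mem_range] at hi
      have h1 : u (i+1) = z (i+1) := Function.update_of_ne (by omega) _ _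
      have h2 : pZ i p x t u = pZ i p x t z := cyl_pZ hp i x t u z hagree
      rw [h1, h2]
  have hDTp : ∀ (p : JetFun), SmoothJet l p → DT F p x t u
      = pT p x t z + ∑ i ∈ Finset.range (l+1), (DX^[i] F) x t u * pZ i p x t z := by
    intro p hp
    rw [dt_eq_finsum (cyl_of_smoothJet hp) F x t u]
    congr 1
    · exact cyl_pT (cyl_of_smoothJet hp) x t u z hagree
    · apply Finset.sum_congr rfl
      intro i _
      rw [cyl_pZ hp i x t u z hagree]
  -- split each sum at u into (sum at z) + (sum of differences)
  have hsplit : ∀ (p : JetFun),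
      (∑ i ∈ Finset.range (l+1), (DX^[i] F) x t u * pZ i p x t z)
      = (∑ i ∈ Finset.range (l+1), (DX^[i] F) x t z * pZ i p x t z)
        + (∑ i ∈ Finset.range (l+1),
            ((DX^[i] F) x t u - (DX^[i] F) x t z) * pZ i p x t z) := by
    intro p
    rw [← Finset.sum_add_distrib]
    apply Finset.sum_congr rfl
    intro i _
    ring
  -- difference of the two Codazzi identities
  have E1u := hCod1 x t u
  rw [hDTp a ha, hDTp b hb, hDXp a ha, hDXp b hb, hinva, hinvb, hinvc, hinv11,
    hinv12, hinv22, hinv31, hinv32, hsplit a, hsplit b] at E1u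
  have E1z := hCod1 x t z
  rw [dt_eq_finsum (cyl_of_smoothJet ha) F x t z,
    dt_eq_finsum (cyl_of_smoothJet hb) F x t z] at E1z
  have hDab : f11 x t z * (∑ i ∈ Finset.range (l+1),
        ((DX^[i] F) x t u - (DX^[i] F) x t z) * pZ i a x t z)
      + η * (∑ i ∈ Finset.range (l+1),
        ((DX^[i] F) x t u - (DX^[i] F) x t z) * pZ i b x t z) = 0 := by
    linear_combination E1u - E1z
  have E2u := hCod2 x t u
  rw [hDTp b hb, hDTp c hc, hDXp b hb, hDXp c hc, hinva, hinvb, hinvc, hinv11,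
    hinv12, hinv22, hinv31, hinv32, hsplit b, hsplit c] at E2u
  have E2z := hCod2 x t z
  rw [dt_eq_finsum (cyl_of_smoothJet hb) F x t z,
    dt_eq_finsum (cyl_of_smoothJet hc) F x t z] at E2z
  have hDbc : f11 x t z * (∑ i ∈ Finset.range (l+1),
        ((DX^[i] F) x t u - (DX^[i] F) x t z) * pZ i b x t z)
      + η * (∑ i ∈ Finset.range (l+1),
        ((DX^[i] F) x t u - (DX^[i] F) x t z) * pZ i c x t z) = 0 := by
    linear_combination E2u - E2z
  -- repackage into a single sum against P_i (resp. R_i)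
  have hrepack : ∀ (p q : JetFun),
      f11 x t z * (∑ i ∈ Finset.range (l+1),
        ((DX^[i] F) x t u - (DX^[i] F) x t z) * pZ i p x t z)
      + η * (∑ i ∈ Finset.range (l+1),
        ((DX^[i] F) x t u - (DX^[i] F) x t z) * pZ i q x t z)
      = ∑ i ∈ Finset.range (l+1), ((DX^[i] F) x t u - (DX^[i] F) x t z)
          * (f11 x t z * pZ i p x t z + η * pZ i q x t z) := by
    intro p q
    rw [Finset.mul_sum, Finset.mul_sum, ← Finset.sum_add_distrib]
    apply Finset.sum_congr rfl
    intro i _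
    ring
  rw [hrepack a b] at hDab
  rw [hrepack b c] at hDbc
  -- the sum collapses to the single term i = j
  have hcollapse : ∀ (p q : JetFun), SmoothJet l p → SmoothJet l q →
      (∀ j', j < j' → j' ≤ l → ∀ x t z,
        f11 x t z * pZ j' p x t z + η * pZ j' q x t z = 0) →
      (∑ i ∈ Finset.range (l+1), ((DX^[i] F) x t u - (DX^[i] F) x t z)
          * (f11 x t z * pZ i p x t z + η * pZ i q x t z))
      = ((DX^[j] F) x t u - (DX^[j] F) x t z)
          * (f11 x t z * pZ j p x t z + η * pZ j q x t z) := by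
    intro p q hp hq hPR
    apply Finset.sum_eq_single_of_mem j (by simp [Finset.mem_range]; omega)
    intro i hi hij
    simp only [Finset.mem_range] at hi
    rcases lt_or_gt_of_ne hij with hlt | hgt
    · -- i < j : Φ_i does not depend on z_m
      have hcylΦ : Cyl (k+i) (DX^[i] F) := cyl_of_smoothJet (phi_sjx hF i).1
      have : (DX^[i] F) x t u = (DX^[i] F) x t z :=
        cyl_update_high hcylΦ (by omega) x t z s
      rw [this, sub_self, zero_mul]
    · -- i > j : the bracket vanishes by induction hypothesis
      rw [hPR i hgt (by omega) x t z, mul_zero]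
  rw [hcollapse a b ha hb (fun j' h1 h2 x t z => (IH' j' h1 h2 x t z).1)] at hDab
  rw [hcollapse b c hb hc (fun j' h1 h2 x t z => (IH' j' h1 h2 x t z).2)] at hDbc
  -- evaluate the difference of Φ_j
  have hΔΦ : (DX^[j] F) x t u - (DX^[j] F) x t z ≠ 0 := by
    by_cases hj0 : 1 ≤ j
    · rw [phi_affine hF hj0 x t z s]
      have : z (k+j) + 1 - z (k+j) = 1 := by ring
      rw [hsdef] at *
      have h1 : (DX^[j] F) x t z + (z m + 1 - z (k + j)) * pZ k F x t z
          - (DX^[j] F) x t z = pZ k F x t z := by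
        rw [hm]
        ring
      rw [h1]
      exact hFzk x t z
    · have hj : j = 0 := by omega
      subst hj
      simp only [Function.iterate_zero, id_eq]
      apply sub_ne_zero.mpr
      apply F_slice_ne hF hFzk x t z
      rw [hsdef, hm]
      simp only [Nat.add_zero]
      linarith
  constructor
  · exact (mul_eq_zero.mp hDab).resolve_left hΔΦ
  · exact (mul_eq_zero.mp hDbc).resolve_left hΔΦ

end S

end Main

namespace Jet

lemma sj_cont_path {m : ℕ} {f : JetFun} (h : SmoothJet m f)
    (x₀ dx t₀ dt : ℝ) (z₀ dz : ℕ → ℝ) :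
    Continuous (fun τ : ℝ => f (x₀ + τ * dx) (t₀ + τ * dt) (fun i => z₀ i + τ * dz i)) := by
  obtain ⟨g, hg, hfg⟩ := h
  have heq : (fun τ : ℝ => f (x₀ + τ * dx) (t₀ + τ * dt) (fun i => z₀ i + τ * dz i))
      = fun τ : ℝ => g (x₀ + τ * dx, t₀ + τ * dt,
          fun q : Fin (m+1) => z₀ q.1 + τ * dz q.1) := by
    funext τ
    rw [hfg]
  rw [heq]
  apply hg.continuous.comp
  refine Continuous.prodMk ?_ (Continuous.prodMk ?_ ?_)
  · exact continuous_const.add (continuous_id.mul continuous_const)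
  · exact continuous_const.add (continuous_id.mul continuous_const)
  · exact continuous_pi fun q => continuous_const.add (continuous_id.mul continuous_const)

lemma hasDerivAt_congr_local {u w : ℝ → ℝ} {v v' σ : ℝ} {I : Set ℝ}
    (hI : IsOpen I) (hσ : σ ∈ I) (h : ∀ s ∈ I, u s = w s)
    (hu : HasDerivAt u v σ) (hw : HasDerivAt w v' σ) : v = v' := by
  have hev : u =ᶠ[nhds σ] w := by
    filter_upwards [hI.mem_nhds hσ] with s hs
    exact h s hs
  rw [← hu.deriv, ← hw.deriv]
  exact hev.deriv_eq

end Jet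

namespace Main

open Jet

/-- finite-sum version of the total x-derivative -/
noncomputable def DXF (l : ℕ) (a : JetFun) : JetFun := fun x t z =>
  pX a x t z + ∑ i ∈ Finset.range (l+1), z (i+1) * pZ i a x t z

section S2

variable {k l : ℕ} {η : ℝ} {F f11 f31 f12 f22 f32 a b c : JetFun}

lemma sj_DXF (ha : SmoothJet l a) : SmoothJet (l+1) (DXF l a) := by
  apply sj_congr (f := fun x t z => pX a x t z
    + ∑ i ∈ Finset.range (l+1), coord (i+1) x t z * pZ i a x t z)
  · apply sj_add (sj_mono (sj_pX ha) (by omega))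
    apply sj_finsetSum
    intro j hj
    simp only [Finset.mem_range] at hj
    exact sj_mul (sj_coord (by omega)) (sj_mono (sj_pZ ha j) (by omega))
  · intro x t z
    rfl

lemma dxf_eq (ha : SmoothJet l a) (x t : ℝ) (z : ℕ → ℝ) :
    DX a x t z = DXF l a x t z := by
  rw [dx_eq_finsum (cyl_of_smoothJet ha) x t z]
  rfl

/-- evaluation of `pZ m` on `DXF l a` assuming the relevant mixed derivatives vanish -/
lemma pZ_DXF_eval (ha : SmoothJet l a) {m : ℕ} (hm : 1 ≤ m) (x t : ℝ) (z : ℕ → ℝ)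
    (hvan1 : ∀ i, i ≤ l → pZ m (pZ i a) x t z = 0)
    (hvan2 : pZ m (pX a) x t z = 0) :
    pZ m (DXF l a) x t z = pZ (m-1) a x t z := by
  have hsum : SmoothJet (l+1) (fun x t z =>
      ∑ i ∈ Finset.range (l+1), coord (i+1) x t z * pZ i a x t z) := by
    apply sj_finsetSum
    intro j hj
    simp only [Finset.mem_range] at hj
    exact sj_mul (sj_coord (by omega)) (sj_mono (sj_pZ ha j) (by omega))
  have h1 : pZ m (DXF l a) x t z
      = pZ m (pX a) x t z + pZ m (fun x t z =>
          ∑ i ∈ Finset.range (l+1), coord (i+1) x t z * pZ i a x t z) x t z := by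
    have := pZ_add (sj_pX ha) hsum m x t z
    convert this using 2
    rfl
  rw [h1, hvan2, zero_add]
  rw [pZ_finsetSum (fun j hj => by
    simp only [Finset.mem_range] at hj
    exact sj_mul (sj_coord (show j+1 ≤ l+1 by omega))
      (sj_mono (sj_pZ ha j) (show l ≤ l+1 by omega))) m x t z]
  have hterm : ∀ i ∈ Finset.range (l+1),
      pZ m (fun x t z => coord (i+1) x t z * pZ i a x t z) x t z
      = (if i + 1 = m then 1 else 0) * pZ i a x t z := by
    intro i hi
    simp only [Finset.mem_range] at hi
    rw [pZ_mul (sj_coord (show i+1 ≤ l+1 by omega)) (sj_pZ ha i) m x t z]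
    rw [pZ_coord (i+1) m x t z, hvan1 i (by omega), mul_zero, add_zero]
  rw [Finset.sum_congr rfl hterm]
  by_cases hml : m - 1 ≤ l
  · have : ∑ i ∈ Finset.range (l+1), (if i + 1 = m then 1 else 0) * pZ i a x t z
        = pZ (m-1) a x t z := by
      rw [Finset.sum_eq_single_of_mem (m-1) (by simp [Finset.mem_range]; omega)]
      · rw [if_pos (by omega), one_mul]
      · intro i _ him
        rw [if_neg (by omega), zero_mul]
    rw [this]
  · have h0 : ∑ i ∈ Finset.range (l+1), (if i + 1 = m then 1 else 0) * pZ i a x t z = 0 := by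
      apply Finset.sum_eq_zero
      intro i hi
      simp only [Finset.mem_range] at hi
      rw [if_neg (by omega), zero_mul]
    rw [h0, pZ_high (cyl_of_smoothJet ha) (by omega) x t z]

/-- evaluation of `pZ m` on the localized first Codazzi combination. -/
lemma pZ_H1_eval (hk : 3 ≤ k)
    (hF : SmoothZ k F) (hf11 : SmoothZ 0 f11) (hf31 : SmoothZ 0 f31)
    (hf12 : SmoothZ (k - 1) f12) (hf32 : SmoothZ (k - 1) f32)
    (hf22 : SmoothZ (k - 2) f22)
    (ha : SmoothJet l a) (hb : SmoothJet l b) (hc : SmoothJet l c)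
    {m : ℕ} (hm : k ≤ m) (x t : ℝ) (z : ℕ → ℝ)
    (hvA : pZ m a x t z = 0) (hvB : pZ m b x t z = 0) (hvC : pZ m c x t z = 0)
    (hvDa : pZ m (DXF l a) x t z = pZ (m-1) a x t z)
    (hvDb : pZ m (DXF l b) x t z = pZ (m-1) b x t z) :
    pZ m (fun x t z => F x t z * pZ 0 f11 x t z * a x t z
      + f12 x t z * DXF l a x t z + f22 x t z * DXF l b x t z
      + 2 * b x t z * (f11 x t z * f32 x t z - f31 x t z * f12 x t z)
      - (a x t z - c x t z) * (η * f32 x t z - f31 x t z * f22 x t z)) x t z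
    = pZ m F x t z * pZ 0 f11 x t z * a x t z
      + f12 x t z * pZ (m-1) a x t z + f22 x t z * pZ (m-1) b x t z := by
  set M := k + l + 1 with hM
  have sF : SmoothJet M F := sj_mono (smoothJet_of_smoothZ hF) (by omega)
  have sL : SmoothJet M (pZ 0 f11) := sj_mono (sj_pZ (smoothJet_of_smoothZ hf11) 0) (by omega)
  have s11 : SmoothJet M f11 := sj_mono (smoothJet_of_smoothZ hf11) (by omega)
  have s31 : SmoothJet M f31 := sj_mono (smoothJet_of_smoothZ hf31) (by omega)
  have s12 : SmoothJet M f12 := sj_mono (smoothJet_of_smoothZ hf12) (by omega)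
  have s32 : SmoothJet M f32 := sj_mono (smoothJet_of_smoothZ hf32) (by omega)
  have s22 : SmoothJet M f22 := sj_mono (smoothJet_of_smoothZ hf22) (by omega)
  have sa : SmoothJet M a := sj_mono ha (by omega)
  have sb : SmoothJet M b := sj_mono hb (by omega)
  have sc : SmoothJet M c := sj_mono hc (by omega)
  have sDa : SmoothJet M (DXF l a) := sj_mono (sj_DXF ha) (by omega)
  have sDb : SmoothJet M (DXF l b) := sj_mono (sj_DXF hb) (by omega)
  -- vanishing of pZ m on the f-functions
  have v11 : pZ m f11 x t z = 0 := pZ_high (cyl_of_smoothJet (smoothJet_of_smoothZ hf11)) (by omega) x t z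
  have v31 : pZ m f31 x t z = 0 := pZ_high (cyl_of_smoothJet (smoothJet_of_smoothZ hf31)) (by omega) x t z
  have v12 : pZ m f12 x t z = 0 := pZ_high (cyl_of_smoothJet (smoothJet_of_smoothZ hf12)) (by omega) x t z
  have v32 : pZ m f32 x t z = 0 := pZ_high (cyl_of_smoothJet (smoothJet_of_smoothZ hf32)) (by omega) x t z
  have v22 : pZ m f22 x t z = 0 := pZ_high (cyl_of_smoothJet (smoothJet_of_smoothZ hf22)) (by omega) x t z
  have vL : pZ m (pZ 0 f11) x t z = 0 := pZ_high (cyl_pZ (smoothJet_of_smoothZ hf11) 0) (by omega) x t z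
  -- structure of the five terms
  have A1 : SmoothJet M (fun x t z => F x t z * pZ 0 f11 x t z * a x t z) :=
    sj_mul (sj_mul sF sL) sa
  have A2 : SmoothJet M (fun x t z => f12 x t z * DXF l a x t z) := sj_mul s12 sDa
  have A3 : SmoothJet M (fun x t z => f22 x t z * DXF l b x t z) := sj_mul s22 sDb
  have A4 : SmoothJet M (fun x t z =>
      2 * b x t z * (f11 x t z * f32 x t z - f31 x t z * f12 x t z)) :=
    sj_mul (sj_const_mul 2 sb) (sj_sub (sj_mul s11 s32) (sj_mul s31 s12))
  have A5 : SmoothJet M (fun x t z =>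
      (a x t z - c x t z) * (η * f32 x t z - f31 x t z * f22 x t z)) :=
    sj_mul (sj_sub sa sc) (sj_sub (sj_const_mul η s32) (sj_mul s31 s22))
  rw [pZ_sub (sj_add (sj_add (sj_add A1 A2) A3) A4) A5 m x t z]
  rw [pZ_add (sj_add (sj_add A1 A2) A3) A4 m x t z]
  rw [pZ_add (sj_add A1 A2) A3 m x t z]
  rw [pZ_add A1 A2 m x t z]
  rw [pZ_mul (sj_mul sF sL) sa m x t z, pZ_mul sF sL m x t z]
  rw [pZ_mul s12 sDa m x t z, pZ_mul s22 sDb m x t z]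
  rw [pZ_mul (sj_const_mul 2 sb) (sj_sub (sj_mul s11 s32) (sj_mul s31 s12)) m x t z]
  rw [pZ_mul (sj_sub sa sc) (sj_sub (sj_const_mul η s32) (sj_mul s31 s22)) m x t z]
  rw [pZ_const_mul 2 sb m x t z]
  rw [pZ_sub (sj_mul s11 s32) (sj_mul s31 s12) m x t z, pZ_mul s11 s32 m x t z,
    pZ_mul s31 s12 m x t z]
  rw [pZ_sub sa sc m x t z]
  rw [pZ_sub (sj_const_mul η s32) (sj_mul s31 s22) m x t z, pZ_const_mul η s32 m x t z,
    pZ_mul s31 s22 m x t z]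
  rw [hvA, hvB, hvC, hvDa, hvDb, v11, v31, v12, v32, v22, vL]
  ring

/-- evaluation of `pZ m` on the localized second Codazzi combination. -/
lemma pZ_H2_eval (hk : 3 ≤ k) (Sval : ℝ)
    (hF : SmoothZ k F) (hf11 : SmoothZ 0 f11) (hf31 : SmoothZ 0 f31)
    (hf12 : SmoothZ (k - 1) f12) (hf32 : SmoothZ (k - 1) f32)
    (hf22 : SmoothZ (k - 2) f22)
    (ha : SmoothJet l a) (hb : SmoothJet l b) (hc : SmoothJet l c)
    {m : ℕ} (hm : k ≤ m) (x t : ℝ) (z : ℕ → ℝ)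
    (hvA : pZ m a x t z = 0) (hvB : pZ m b x t z = 0) (hvC : pZ m c x t z = 0)
    (hvDb : pZ m (DXF l b) x t z = pZ (m-1) b x t z)
    (hvDc : pZ m (DXF l c) x t z = pZ (m-1) c x t z) :
    pZ m (fun x t z => F x t z * pZ 0 f11 x t z * (Sval + η * b x t z)
      + η * f12 x t z * DXF l b x t z + η * f22 x t z * DXF l c x t z
      - η * (a x t z - c x t z) * (f11 x t z * f32 x t z - f31 x t z * f12 x t z)
      - 2 * η * b x t z * (η * f32 x t z - f31 x t z * f22 x t z)) x t z
    = pZ m F x t z * pZ 0 f11 x t z * (Sval + η * b x t z)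
      + η * f12 x t z * pZ (m-1) b x t z + η * f22 x t z * pZ (m-1) c x t z := by
  set M := k + l + 1 with hM
  have sF : SmoothJet M F := sj_mono (smoothJet_of_smoothZ hF) (by omega)
  have sL : SmoothJet M (pZ 0 f11) := sj_mono (sj_pZ (smoothJet_of_smoothZ hf11) 0) (by omega)
  have s11 : SmoothJet M f11 := sj_mono (smoothJet_of_smoothZ hf11) (by omega)
  have s31 : SmoothJet M f31 := sj_mono (smoothJet_of_smoothZ hf31) (by omega)
  have s12 : SmoothJet M f12 := sj_mono (smoothJet_of_smoothZ hf12) (by omega)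
  have s32 : SmoothJet M f32 := sj_mono (smoothJet_of_smoothZ hf32) (by omega)
  have s22 : SmoothJet M f22 := sj_mono (smoothJet_of_smoothZ hf22) (by omega)
  have sa : SmoothJet M a := sj_mono ha (by omega)
  have sb : SmoothJet M b := sj_mono hb (by omega)
  have sc : SmoothJet M c := sj_mono hc (by omega)
  have sDb : SmoothJet M (DXF l b) := sj_mono (sj_DXF hb) (by omega)
  have sDc : SmoothJet M (DXF l c) := sj_mono (sj_DXF hc) (by omega)
  have v11 : pZ m f11 x t z = 0 := pZ_high (cyl_of_smoothJet (smoothJet_of_smoothZ hf11)) (by omega) x t z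
  have v31 : pZ m f31 x t z = 0 := pZ_high (cyl_of_smoothJet (smoothJet_of_smoothZ hf31)) (by omega) x t z
  have v12 : pZ m f12 x t z = 0 := pZ_high (cyl_of_smoothJet (smoothJet_of_smoothZ hf12)) (by omega) x t z
  have v32 : pZ m f32 x t z = 0 := pZ_high (cyl_of_smoothJet (smoothJet_of_smoothZ hf32)) (by omega) x t z
  have v22 : pZ m f22 x t z = 0 := pZ_high (cyl_of_smoothJet (smoothJet_of_smoothZ hf22)) (by omega) x t z
  have vL : pZ m (pZ 0 f11) x t z = 0 := pZ_high (cyl_pZ (smoothJet_of_smoothZ hf11) 0) (by omega) x t z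
  have B0 : SmoothJet M (fun x t z => Sval + η * b x t z) :=
    sj_add (sj_const M Sval) (sj_const_mul η sb)
  have A1 : SmoothJet M (fun x t z => F x t z * pZ 0 f11 x t z * (Sval + η * b x t z)) :=
    sj_mul (sj_mul sF sL) B0
  have A2 : SmoothJet M (fun x t z => η * f12 x t z * DXF l b x t z) :=
    sj_mul (sj_const_mul η s12) sDb
  have A3 : SmoothJet M (fun x t z => η * f22 x t z * DXF l c x t z) :=
    sj_mul (sj_const_mul η s22) sDc
  have A4 : SmoothJet M (fun x t z =>
      η * (a x t z - c x t z) * (f11 x t z * f32 x t z - f31 x t z * f12 x t z)) :=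
    sj_mul (sj_const_mul η (sj_sub sa sc)) (sj_sub (sj_mul s11 s32) (sj_mul s31 s12))
  have A5 : SmoothJet M (fun x t z =>
      2 * η * b x t z * (η * f32 x t z - f31 x t z * f22 x t z)) :=
    sj_mul (sj_const_mul (2*η) sb) (sj_sub (sj_const_mul η s32) (sj_mul s31 s22))
  have hre : (fun x t z => F x t z * pZ 0 f11 x t z * (Sval + η * b x t z)
      + η * f12 x t z * DXF l b x t z + η * f22 x t z * DXF l c x t z
      - η * (a x t z - c x t z) * (f11 x t z * f32 x t z - f31 x t z * f12 x t z)
      - 2 * η * b x t z * (η * f32 x t z - f31 x t z * f22 x t z))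
      = (fun x t z => ((F x t z * pZ 0 f11 x t z * (Sval + η * b x t z)
      + η * f12 x t z * DXF l b x t z + η * f22 x t z * DXF l c x t z)
      - η * (a x t z - c x t z) * (f11 x t z * f32 x t z - f31 x t z * f12 x t z))
      - 2 * η * b x t z * (η * f32 x t z - f31 x t z * f22 x t z)) := by
    funext x t z
    ring
  rw [hre]
  rw [pZ_sub (sj_sub (sj_add (sj_add A1 A2) A3) A4) A5 m x t z]
  rw [pZ_sub (sj_add (sj_add A1 A2) A3) A4 m x t z]
  rw [pZ_add (sj_add A1 A2) A3 m x t z]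
  rw [pZ_add A1 A2 m x t z]
  rw [pZ_mul (sj_mul sF sL) B0 m x t z, pZ_mul sF sL m x t z]
  rw [pZ_add (sj_const M Sval) (sj_const_mul η sb) m x t z, pZ_const Sval m x t z,
    pZ_const_mul η sb m x t z]
  rw [pZ_mul (sj_const_mul η s12) sDb m x t z, pZ_const_mul η s12 m x t z]
  rw [pZ_mul (sj_const_mul η s22) sDc m x t z, pZ_const_mul η s22 m x t z]
  rw [pZ_mul (sj_const_mul η (sj_sub sa sc)) (sj_sub (sj_mul s11 s32) (sj_mul s31 s12)) m x t z]
  rw [pZ_const_mul η (sj_sub sa sc) m x t z, pZ_sub sa sc m x t z]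
  rw [pZ_sub (sj_mul s11 s32) (sj_mul s31 s12) m x t z, pZ_mul s11 s32 m x t z,
    pZ_mul s31 s12 m x t z]
  rw [pZ_mul (sj_const_mul (2*η) sb) (sj_sub (sj_const_mul η s32) (sj_mul s31 s22)) m x t z]
  rw [pZ_const_mul (2*η) sb m x t z]
  rw [pZ_sub (sj_const_mul η s32) (sj_mul s31 s22) m x t z, pZ_const_mul η s32 m x t z,
    pZ_mul s31 s22 m x t z]
  rw [hvA, hvB, hvC, hvDb, hvDc, v11, v31, v12, v32, v22, vL]
  ring

end S2

/-- box predicate -/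
def InBox (l : ℕ) (δ x₀ t₀ : ℝ) (z₀ : ℕ → ℝ) (x t : ℝ) (z : ℕ → ℝ) : Prop :=
  |x - x₀| < δ ∧ |t - t₀| < δ ∧ ∀ i ≤ l, |z i - z₀ i| < δ

section S3

variable {k l : ℕ} {η : ℝ} {F f11 f31 f12 f22 f32 a b c : JetFun}

lemma box_vanish (hk : 3 ≤ k) (hη : η ≠ 0)
    (hF : SmoothZ k F) (hFzk : ∀ x t z, pZ k F x t z ≠ 0)
    (hf11 : SmoothZ 0 f11) (hf31 : SmoothZ 0 f31)
    (hf12 : SmoothZ (k - 1) f12) (hf32 : SmoothZ (k - 1) f32)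
    (hf22 : SmoothZ (k - 2) f22)
    (hF1 : ∀ x t z, pZ 0 f31 x t z ≠ 0)
    (hF2 : ∀ x t z, f11 x t z * pZ 0 f11 x t z = f31 x t z * pZ 0 f31 x t z)
    (hΔ12 : ∀ x t z, f11 x t z * f22 x t z - η * f12 x t z ≠ 0)
    (ha : SmoothJet l a) (hb : SmoothJet l b) (hc : SmoothJet l c)
    (hGauss : ∀ x t z, a x t z * c x t z - (b x t z) ^ 2 = -1)
    (hCod1 : ∀ x t z,
      f11 x t z * DT F a x t z + η * DT F b x t z
        - f12 x t z * DX a x t z - f22 x t z * DX b x t z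
        - 2 * b x t z * (f11 x t z * f32 x t z - f31 x t z * f12 x t z)
        + (a x t z - c x t z) * (η * f32 x t z - f31 x t z * f22 x t z) = 0)
    (hCod2 : ∀ x t z,
      f11 x t z * DT F b x t z + η * DT F c x t z
        - f12 x t z * DX b x t z - f22 x t z * DX c x t z
        + (a x t z - c x t z) * (f11 x t z * f32 x t z - f31 x t z * f12 x t z)
        + 2 * b x t z * (η * f32 x t z - f31 x t z * f22 x t z) = 0)
    (hband : ∀ j, l + 2 ≤ k + j → j ≤ l → ∀ x t z,
      f11 x t z * pZ j a x t z + η * pZ j b x t z = 0 ∧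
      f11 x t z * pZ j b x t z + η * pZ j c x t z = 0)
    {j₀ : ℕ} (hj₀k : l + 2 ≤ k + j₀) (hj₀l : j₀ ≤ l) :
    ∀ x t z, pZ j₀ a x t z = 0 := by
  by_contra hcon
  push_neg at hcon
  obtain ⟨x₀, t₀, z₀, hne⟩ := hcon
  obtain ⟨δ, hδ, hbox⟩ := sj_ne_zero_box (sj_pZ ha j₀) x₀ t₀ z₀ hne
  set InB : ℝ → ℝ → (ℕ → ℝ) → Prop := InBox l δ x₀ t₀ z₀ with hInBdef
  have hInB_iff : ∀ x t z, InB x t z ↔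
      (|x - x₀| < δ ∧ |t - t₀| < δ ∧ ∀ i ≤ l, |z i - z₀ i| < δ) := by
    intro x t z; rw [hInBdef]; rfl
  have hcenter : InB x₀ t₀ z₀ := by
    rw [hInB_iff]
    refine ⟨by simpa using hδ, by simpa using hδ, fun i _ => by simpa using hδ⟩
  have hboxne : ∀ x t z, InB x t z → pZ j₀ a x t z ≠ 0 := by
    intro x t z hB
    rw [hInB_iff] at hB
    exact hbox x t z hB.1 hB.2.1 hB.2.2
  have hupdZ : ∀ x t z, InB x t z → ∀ i s, (i ≤ l → |s - z₀ i| < δ) →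
      InB x t (Function.update z i s) := by
    intro x t z hB i s hs
    rw [hInB_iff] at hB ⊢
    refine ⟨hB.1, hB.2.1, ?_⟩
    intro i' hi'
    by_cases hii : i' = i
    · subst hii
      rw [Function.update_self]
      exact hs hi'
    · rw [Function.update_of_ne hii]
      exact hB.2.2 i' hi'
  have hupdT : ∀ x t z, InB x t z → ∀ s, |s - t₀| < δ → InB x s z := by
    intro x t z hB s hs
    rw [hInB_iff] at hB ⊢
    exact ⟨hB.1, hs, hB.2.2⟩
  have hupdX : ∀ x t z, InB x t z → ∀ s, |s - x₀| < δ → InB s t z := by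
    intro x t z hB s hs
    rw [hInB_iff] at hB ⊢
    exact ⟨hs, hB.2.1, hB.2.2⟩
  have hmemIoo : ∀ x t z, InB x t z → ∀ i, i ≤ l → z i ∈ Set.Ioo (z₀ i - δ) (z₀ i + δ) := by
    intro x t z hB i hil
    rw [hInB_iff] at hB
    have := hB.2.2 i hil
    rw [abs_lt] at this
    constructor <;> linarith
  -- Q = 0 on the box
  have hQ0 : ∀ x t z, InB x t z →
      (f11 x t z)^2 * a x t z + 2*η*(f11 x t z)*(b x t z) + η^2*(c x t z) = 0 := by
    intro x t z hB
    have hPR := hband j₀ hj₀k hj₀l x t z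
    have hG := gauss_deriv ha hb hc hGauss j₀ x t z
    have hprod : ((f11 x t z)^2 * a x t z + 2*η*(f11 x t z)*(b x t z) + η^2*(c x t z))
        * pZ j₀ a x t z = 0 := by
      linear_combination η^2 * hG + (a x t z * f11 x t z + 2 * b x t z * η) * hPR.1
        - a x t z * η * hPR.2
    exact (mul_eq_zero.mp hprod).resolve_right (hboxne x t z hB)
  -- S² = η² on the box
  have hSsq : ∀ x t z, InB x t z → (f11 x t z * a x t z + η * b x t z)^2 = η^2 := by
    intro x t z hB
    linear_combination (a x t z) * hQ0 x t z hB - η^2 * hGauss x t z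
  set Sval := f11 x₀ t₀ z₀ * a x₀ t₀ z₀ + η * b x₀ t₀ z₀ with hSvaldef
  have hSval2 : Sval^2 = η^2 := hSsq x₀ t₀ z₀ hcenter
  have hSvne : Sval ≠ 0 := by
    intro h0
    rw [h0] at hSval2
    exact hη (by nlinarith)
  have sjSS : SmoothJet l (fun x t z => f11 x t z * a x t z + η * b x t z) :=
    sj_add (sj_mul (sj_mono (smoothJet_of_smoothZ hf11) (by omega)) ha) (sj_const_mul η hb)
  -- S is constant on the box
  have hSconst : ∀ x t z, InB x t z → f11 x t z * a x t z + η * b x t z = Sval := by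
    intro x t z hB
    rw [hInB_iff] at hB
    set u : ℝ → ℝ := fun τ => f11 (x₀ + τ * (x - x₀)) (t₀ + τ * (t - t₀))
        (fun i => z₀ i + τ * (z i - z₀ i)) * a (x₀ + τ * (x - x₀)) (t₀ + τ * (t - t₀))
        (fun i => z₀ i + τ * (z i - z₀ i)) + η * b (x₀ + τ * (x - x₀)) (t₀ + τ * (t - t₀))
        (fun i => z₀ i + τ * (z i - z₀ i)) with hudef
    have hucont : Continuous u :=
      sj_cont_path sjSS x₀ (x - x₀) t₀ (t - t₀) z₀ (fun i => z i - z₀ i)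
    have hpath : ∀ τ ∈ Set.Icc (0:ℝ) 1, InB (x₀ + τ * (x - x₀)) (t₀ + τ * (t - t₀))
        (fun i => z₀ i + τ * (z i - z₀ i)) := by
      intro τ hτ
      obtain ⟨h0, h1⟩ := hτ
      have habs : ∀ (p q : ℝ), |q - p| < δ → |p + τ * (q - p) - p| < δ := by
        intro p q hpq
        have he : p + τ * (q - p) - p = τ * (q - p) := by ring
        rw [he, abs_mul]
        calc |τ| * |q - p| ≤ 1 * |q - p| := by
              apply mul_le_mul_of_nonneg_right _ (abs_nonneg _)
              rw [abs_of_nonneg h0]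
              exact h1
        _ = |q - p| := one_mul _
        _ < δ := hpq
      rw [hInB_iff]
      refine ⟨habs x₀ x hB.1, habs t₀ t hB.2.1, ?_⟩
      intro i hil
      have : z₀ i + τ * (z i - z₀ i) - z₀ i = z₀ i + τ * (z i - z₀ i) - z₀ i := rfl
      exact habs (z₀ i) (z i) (hB.2.2 i hil)
    have hsq : ∀ τ ∈ Set.Icc (0:ℝ) 1, u τ ^ 2 = η ^ 2 := by
      intro τ hτ
      exact hSsq _ _ _ (hpath τ hτ)
    have h10 := sq_const_path hucont hsq hη
    have hu1 : u 1 = f11 x t z * a x t z + η * b x t z := by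
      rw [hudef]
      simp only []
      have e1 : x₀ + 1 * (x - x₀) = x := by ring
      have e2 : t₀ + 1 * (t - t₀) = t := by ring
      have e3 : (fun i => z₀ i + 1 * (z i - z₀ i)) = z := by funext i; ring
      rw [e1, e2, e3]
    have hu0 : u 0 = Sval := by
      rw [hudef]
      simp only []
      have e1 : x₀ + 0 * (x - x₀) = x₀ := by ring
      have e2 : t₀ + 0 * (t - t₀) = t₀ := by ring
      have e3 : (fun i => z₀ i + 0 * (z i - z₀ i)) = z₀ := by funext i; ring
      rw [e1, e2, e3]
    rw [← hu1, h10, hu0]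
  -- T relation on the box
  have hT : ∀ x t z, InB x t z →
      η * (f11 x t z * b x t z + η * c x t z) = -(f11 x t z * Sval) := by
    intro x t z hB
    linear_combination hQ0 x t z hB - (f11 x t z) * hSconst x t z hB
  -- P_i = 0 on the box for i ≥ 1
  have hP_box : ∀ i, 1 ≤ i → ∀ x t z, InB x t z →
      f11 x t z * pZ i a x t z + η * pZ i b x t z = 0 := by
    intro i hi x t z hB
    by_cases hil : i ≤ l
    · have hd : HasDerivAt (fun s => f11 x t z * a x t (Function.update z i s)
          + η * b x t (Function.update z i s))
          (f11 x t z * pZ i a x t z + η * pZ i b x t z) (z i) :=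
        ((sj_hasDerivAt_slice ha i x t z).const_mul _).add
          ((sj_hasDerivAt_slice hb i x t z).const_mul _)
      apply hasDerivAt_local_const_eq_zero (C := Sval) isOpen_Ioo (hmemIoo x t z hB i hil) hd
      intro s hs
      have hsd : |s - z₀ i| < δ := by
        rw [abs_lt]
        obtain ⟨hs1, hs2⟩ := hs
        constructor <;> linarith
      have hBu : InB x t (Function.update z i s) := hupdZ x t z hB i s (fun _ => hsd)
      have hf11u : f11 x t (Function.update z i s) = f11 x t z :=
        cyl_of_smoothJet (smoothJet_of_smoothZ hf11) x t _ z
          (fun i' hi' => Function.update_of_ne (by omega) _ _)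
      rw [← hf11u]
      exact hSconst x t _ hBu
    · rw [pZ_high (cyl_of_smoothJet ha) (by omega) x t z,
        pZ_high (cyl_of_smoothJet hb) (by omega) x t z]
      ring
  -- R_i = 0 on the box for i ≥ 1
  have hR_box : ∀ i, 1 ≤ i → ∀ x t z, InB x t z →
      f11 x t z * pZ i b x t z + η * pZ i c x t z = 0 := by
    intro i hi x t z hB
    by_cases hil : i ≤ l
    · have hd : HasDerivAt (fun s => η * (f11 x t z * b x t (Function.update z i s)
          + η * c x t (Function.update z i s)))
          (η * (f11 x t z * pZ i b x t z + η * pZ i c x t z)) (z i) :=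
        (((sj_hasDerivAt_slice hb i x t z).const_mul _).add
          ((sj_hasDerivAt_slice hc i x t z).const_mul _)).const_mul η
      have h0 : η * (f11 x t z * pZ i b x t z + η * pZ i c x t z) = 0 := by
        apply hasDerivAt_local_const_eq_zero (C := -(f11 x t z * Sval)) isOpen_Ioo
          (hmemIoo x t z hB i hil) hd
        intro s hs
        have hsd : |s - z₀ i| < δ := by
          rw [abs_lt]
          obtain ⟨hs1, hs2⟩ := hs
          constructor <;> linarith
        have hBu : InB x t (Function.update z i s) := hupdZ x t z hB i s (fun _ => hsd)
        have hf11u : f11 x t (Function.update z i s) = f11 x t z :=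
          cyl_of_smoothJet (smoothJet_of_smoothZ hf11) x t _ z
            (fun i' hi' => Function.update_of_ne (by omega) _ _)
        rw [← hf11u]
        exact hT x t _ hBu
      exact (mul_eq_zero.mp h0).resolve_left hη
    · rw [pZ_high (cyl_of_smoothJet hb) (by omega) x t z,
        pZ_high (cyl_of_smoothJet hc) (by omega) x t z]
      ring
  -- P_0 on the box
  have hP0_box : ∀ x t z, InB x t z →
      pZ 0 f11 x t z * a x t z + (f11 x t z * pZ 0 a x t z + η * pZ 0 b x t z) = 0 := by
    intro x t z hB
    have hda := sj_hasDerivAt_slice ha 0 x t z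
    have hdb := sj_hasDerivAt_slice hb 0 x t z
    have hdf := sj_hasDerivAt_slice (smoothJet_of_smoothZ hf11) 0 x t z
    have hd : HasDerivAt (fun s => f11 x t (Function.update z 0 s) * a x t (Function.update z 0 s)
        + η * b x t (Function.update z 0 s))
        (pZ 0 f11 x t z * a x t z + f11 x t z * pZ 0 a x t z + η * pZ 0 b x t z) (z 0) := by
      have h1 := hdf.mul hda
      rw [Function.update_eq_self] at h1
      exact h1.add (hdb.const_mul η)
    have h0 : pZ 0 f11 x t z * a x t z + f11 x t z * pZ 0 a x t z + η * pZ 0 b x t z = 0 := by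
      apply hasDerivAt_local_const_eq_zero (C := Sval) isOpen_Ioo
        (hmemIoo x t z hB 0 (by omega)) hd
      intro s hs
      have hsd : |s - z₀ 0| < δ := by
        rw [abs_lt]
        obtain ⟨hs1, hs2⟩ := hs
        constructor <;> linarith
      exact hSconst x t _ (hupdZ x t z hB 0 s (fun _ => hsd))
    linarith [h0]
  -- R_0 on the box (η-scaled)
  have hR0_box : ∀ x t z, InB x t z →
      η * (pZ 0 f11 x t z * b x t z + f11 x t z * pZ 0 b x t z + η * pZ 0 c x t z)
        = -(pZ 0 f11 x t z * Sval) := by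
    intro x t z hB
    have hdb := sj_hasDerivAt_slice hb 0 x t z
    have hdc := sj_hasDerivAt_slice hc 0 x t z
    have hdf := sj_hasDerivAt_slice (smoothJet_of_smoothZ hf11) 0 x t z
    have hd : HasDerivAt (fun s => η * (f11 x t (Function.update z 0 s) * b x t (Function.update z 0 s)
        + η * c x t (Function.update z 0 s)))
        (η * (pZ 0 f11 x t z * b x t z + f11 x t z * pZ 0 b x t z + η * pZ 0 c x t z)) (z 0) := by
      have h1 := hdf.mul hdb
      rw [Function.update_eq_self] at h1
      have h2 := (h1.add (hdc.const_mul η)).const_mul η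
      first
      | exact h2
      | (convert h2 using 1; ring)
    have hw : HasDerivAt (fun s => -(f11 x t (Function.update z 0 s) * Sval))
        (-(pZ 0 f11 x t z * Sval)) (z 0) := (hdf.mul_const Sval).neg
    apply hasDerivAt_congr_local (I := Set.Ioo (z₀ 0 - δ) (z₀ 0 + δ)) isOpen_Ioo
      (hmemIoo x t z hB 0 (by omega)) ?_ hd hw
    intro s hs
    have hsd : |s - z₀ 0| < δ := by
      rw [abs_lt]
      obtain ⟨hs1, hs2⟩ := hs
      constructor <;> linarith
    exact hT x t _ (hupdZ x t z hB 0 s (fun _ => hsd))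
  -- time-derivative relations on the box
  have hPT_box : ∀ x t z, InB x t z →
      f11 x t z * pT a x t z + η * pT b x t z = 0 := by
    intro x t z hB
    rw [hInB_iff] at hB
    have hd : HasDerivAt (fun s => f11 x t z * a x s z + η * b x s z)
        (f11 x t z * pT a x t z + η * pT b x t z) t :=
      ((sj_hasDerivAt_sliceT ha x t z).const_mul _).add
        ((sj_hasDerivAt_sliceT hb x t z).const_mul _)
    apply hasDerivAt_local_const_eq_zero (C := Sval) (I := Set.Ioo (t₀ - δ) (t₀ + δ))
      isOpen_Ioo ?_ hd
    · intro s hs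
      have hsd : |s - t₀| < δ := by
        rw [abs_lt]
        obtain ⟨hs1, hs2⟩ := hs
        constructor <;> linarith
      have hBu : InB x s z := hupdT x t z (by rw [hInB_iff]; exact hB) s hsd
      have hf11u : f11 x s z = f11 x t z := xtInv_of_smoothZ hf11 x s x t z
      rw [← hf11u]
      exact hSconst x s z hBu
    · have := hB.2.1
      rw [abs_lt] at this
      constructor <;> linarith
  have hRT_box : ∀ x t z, InB x t z →
      f11 x t z * pT b x t z + η * pT c x t z = 0 := by
    intro x t z hB
    rw [hInB_iff] at hB
    have hd : HasDerivAt (fun s => η * (f11 x t z * b x s z + η * c x s z))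
        (η * (f11 x t z * pT b x t z + η * pT c x t z)) t :=
      (((sj_hasDerivAt_sliceT hb x t z).const_mul _).add
        ((sj_hasDerivAt_sliceT hc x t z).const_mul _)).const_mul η
    have h0 : η * (f11 x t z * pT b x t z + η * pT c x t z) = 0 := by
      apply hasDerivAt_local_const_eq_zero (C := -(f11 x t z * Sval))
        (I := Set.Ioo (t₀ - δ) (t₀ + δ)) isOpen_Ioo ?_ hd
      · intro s hs
        have hsd : |s - t₀| < δ := by
          rw [abs_lt]
          obtain ⟨hs1, hs2⟩ := hs
          constructor <;> linarith
        have hBu : InB x s z := hupdT x t z (by rw [hInB_iff]; exact hB) s hsd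
        have hf11u : f11 x s z = f11 x t z := xtInv_of_smoothZ hf11 x s x t z
        rw [← hf11u]
        exact hT x s z hBu
      · have := hB.2.1
        rw [abs_lt] at this
        constructor <;> linarith
    exact (mul_eq_zero.mp h0).resolve_left hη
  -- mixed-derivative helpers on the box
  have hmixZ : ∀ (p : JetFun), SmoothJet l p → ∀ m,
      (∀ x t z, InB x t z → pZ m p x t z = 0) → ∀ i, i ≤ l → ∀ x t z, InB x t z →
      pZ m (pZ i p) x t z = 0 := by
    intro p hp m hv i hil x t z hB
    rw [sj_pZ_pZ_comm hp m i x t z]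
    show deriv _ _ = 0
    apply deriv_local_const (C := 0) isOpen_Ioo (hmemIoo x t z hB i hil)
    intro s hs
    have hsd : |s - z₀ i| < δ := by
      rw [abs_lt]; obtain ⟨hs1, hs2⟩ := hs; constructor <;> linarith
    exact hv x t _ (hupdZ x t z hB i s (fun _ => hsd))
  have hmixX : ∀ (p : JetFun), SmoothJet l p → ∀ m,
      (∀ x t z, InB x t z → pZ m p x t z = 0) → ∀ x t z, InB x t z →
      pZ m (pX p) x t z = 0 := by
    intro p hp m hv x t z hB
    rw [sj_pX_pZ_comm hp m x t z]
    show deriv _ _ = 0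
    have hmem : x ∈ Set.Ioo (x₀ - δ) (x₀ + δ) := by
      have h1 := ((hInB_iff x t z).mp hB).1
      rw [abs_lt] at h1
      constructor <;> linarith
    apply deriv_local_const (C := 0) isOpen_Ioo hmem
    intro s hs
    have hsd : |s - x₀| < δ := by
      rw [abs_lt]; obtain ⟨hs1, hs2⟩ := hs; constructor <;> linarith
    exact hv s t z (hupdX x t z hB s hsd)
  have hDXFv : ∀ (p : JetFun), SmoothJet l p → ∀ m, 1 ≤ m →
      (∀ x t z, InB x t z → pZ m p x t z = 0) → ∀ x t z, InB x t z →
      pZ m (DXF l p) x t z = pZ (m-1) p x t z := by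
    intro p hp m hm hv x t z hB
    exact pZ_DXF_eval hp hm x t z (fun i hil => hmixZ p hp m hv i hil x t z hB)
      (hmixX p hp m hv x t z hB)
  -- localized first Codazzi identity
  have hH1 : ∀ x t z, InB x t z →
      F x t z * pZ 0 f11 x t z * a x t z
      + f12 x t z * DXF l a x t z + f22 x t z * DXF l b x t z
      + 2 * b x t z * (f11 x t z * f32 x t z - f31 x t z * f12 x t z)
      - (a x t z - c x t z) * (η * f32 x t z - f31 x t z * f22 x t z) = 0 := by
    intro x t z hB
    have e := hCod1 x t z
    rw [dt_eq_finsum (cyl_of_smoothJet ha) F x t z,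
      dt_eq_finsum (cyl_of_smoothJet hb) F x t z,
      dxf_eq ha x t z, dxf_eq hb x t z] at e
    have hrp : f11 x t z * (∑ i ∈ Finset.range (l+1), (DX^[i] F) x t z * pZ i a x t z)
        + η * (∑ i ∈ Finset.range (l+1), (DX^[i] F) x t z * pZ i b x t z)
        = ∑ i ∈ Finset.range (l+1), (DX^[i] F) x t z
            * (f11 x t z * pZ i a x t z + η * pZ i b x t z) := by
      rw [Finset.mul_sum, Finset.mul_sum, ← Finset.sum_add_distrib]
      apply Finset.sum_congr rfl
      intro i _
      ring
    have hone : (∑ i ∈ Finset.range (l+1), (DX^[i] F) x t z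
          * (f11 x t z * pZ i a x t z + η * pZ i b x t z))
        = F x t z * (f11 x t z * pZ 0 a x t z + η * pZ 0 b x t z) := by
      rw [Finset.sum_eq_single_of_mem 0 (by simp)
        (fun i _ hi0 => by rw [hP_box i (by omega) x t z hB, mul_zero])]
      rfl
    have hSig : f11 x t z * (∑ i ∈ Finset.range (l+1), (DX^[i] F) x t z * pZ i a x t z)
        + η * (∑ i ∈ Finset.range (l+1), (DX^[i] F) x t z * pZ i b x t z)
        + F x t z * pZ 0 f11 x t z * a x t z = 0 := by
      rw [hrp, hone]
      linear_combination (F x t z) * hP0_box x t z hB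
    linear_combination (-1 : ℝ) * e + hPT_box x t z hB + hSig
  -- localized second Codazzi identity
  have hH2 : ∀ x t z, InB x t z →
      F x t z * pZ 0 f11 x t z * (Sval + η * b x t z)
      + η * f12 x t z * DXF l b x t z + η * f22 x t z * DXF l c x t z
      - η * (a x t z - c x t z) * (f11 x t z * f32 x t z - f31 x t z * f12 x t z)
      - 2 * η * b x t z * (η * f32 x t z - f31 x t z * f22 x t z) = 0 := by
    intro x t z hB
    have e := hCod2 x t z
    rw [dt_eq_finsum (cyl_of_smoothJet hb) F x t z,
      dt_eq_finsum (cyl_of_smoothJet hc) F x t z,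
      dxf_eq hb x t z, dxf_eq hc x t z] at e
    have hrp : f11 x t z * (∑ i ∈ Finset.range (l+1), (DX^[i] F) x t z * pZ i b x t z)
        + η * (∑ i ∈ Finset.range (l+1), (DX^[i] F) x t z * pZ i c x t z)
        = ∑ i ∈ Finset.range (l+1), (DX^[i] F) x t z
            * (f11 x t z * pZ i b x t z + η * pZ i c x t z) := by
      rw [Finset.mul_sum, Finset.mul_sum, ← Finset.sum_add_distrib]
      apply Finset.sum_congr rfl
      intro i _
      ring
    have hone : (∑ i ∈ Finset.range (l+1), (DX^[i] F) x t z
          * (f11 x t z * pZ i b x t z + η * pZ i c x t z))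
        = F x t z * (f11 x t z * pZ 0 b x t z + η * pZ 0 c x t z) := by
      rw [Finset.sum_eq_single_of_mem 0 (by simp)
        (fun i _ hi0 => by rw [hR_box i (by omega) x t z hB, mul_zero])]
      rfl
    have hSig : η * (f11 x t z * (∑ i ∈ Finset.range (l+1), (DX^[i] F) x t z * pZ i b x t z)
        + η * (∑ i ∈ Finset.range (l+1), (DX^[i] F) x t z * pZ i c x t z))
        + F x t z * pZ 0 f11 x t z * (Sval + η * b x t z) = 0 := by
      rw [hrp, hone]
      linear_combination (F x t z) * hR0_box x t z hB
    linear_combination (-η) * e + η * hRT_box x t z hB + hSig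
  -- downward induction : a_j = b_j = c_j = 0 on the box for k ≤ j ≤ l
  have hstepA : ∀ j, k ≤ j → j ≤ l → ∀ x t z, InB x t z →
      pZ j a x t z = 0 ∧ pZ j b x t z = 0 ∧ pZ j c x t z = 0 := by
    suffices main : ∀ d j, l - j = d → k ≤ j → j ≤ l → ∀ x t z, InB x t z →
        pZ j a x t z = 0 ∧ pZ j b x t z = 0 ∧ pZ j c x t z = 0 by
      exact fun j h1 h2 => main (l - j) j rfl h1 h2
    intro d
    induction d using Nat.strong_induction_on with
    | _ d IH =>
    intro j hd hkj hjl
    have IH' : ∀ j', j < j' → ∀ x t z, InB x t z →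
        pZ j' a x t z = 0 ∧ pZ j' b x t z = 0 ∧ pZ j' c x t z = 0 := by
      intro j' h1 x t z hB
      by_cases h2 : j' ≤ l
      · exact IH (l - j') (by omega) j' rfl (by omega) h2 x t z hB
      · exact ⟨pZ_high (cyl_of_smoothJet ha) (by omega) x t z,
          pZ_high (cyl_of_smoothJet hb) (by omega) x t z,
          pZ_high (cyl_of_smoothJet hc) (by omega) x t z⟩
    have hva : ∀ x t z, InB x t z → pZ (j+1) a x t z = 0 :=
      fun x t z hB => (IH' (j+1) (by omega) x t z hB).1
    have hvb : ∀ x t z, InB x t z → pZ (j+1) b x t z = 0 :=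
      fun x t z hB => (IH' (j+1) (by omega) x t z hB).2.1
    have hvc : ∀ x t z, InB x t z → pZ (j+1) c x t z = 0 :=
      fun x t z hB => (IH' (j+1) (by omega) x t z hB).2.2
    intro x t z hB
    have hE1 : pZ (j+1) (fun x t z => F x t z * pZ 0 f11 x t z * a x t z
        + f12 x t z * DXF l a x t z + f22 x t z * DXF l b x t z
        + 2 * b x t z * (f11 x t z * f32 x t z - f31 x t z * f12 x t z)
        - (a x t z - c x t z) * (η * f32 x t z - f31 x t z * f22 x t z)) x t z = 0 := by
      show deriv _ _ = 0
      by_cases hjl1 : j + 1 ≤ l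
      · apply deriv_local_const (C := 0) isOpen_Ioo (hmemIoo x t z hB (j+1) hjl1)
        intro s hs
        have hsd : |s - z₀ (j+1)| < δ := by
          rw [abs_lt]; obtain ⟨h1, h2⟩ := hs; constructor <;> linarith
        exact hH1 x t _ (hupdZ x t z hB (j+1) s (fun _ => hsd))
      · apply deriv_local_const (C := 0) isOpen_univ (Set.mem_univ _)
        intro s _
        exact hH1 x t _ (hupdZ x t z hB (j+1) s (fun hcontra => absurd hcontra hjl1))
    have hv := pZ_H1_eval (η := η) hk hF hf11 hf31 hf12 hf32 hf22 ha hb hc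
      (m := j+1) (by omega) x t z (hva x t z hB) (hvb x t z hB) (hvc x t z hB)
      (hDXFv a ha (j+1) (by omega) hva x t z hB)
      (hDXFv b hb (j+1) (by omega) hvb x t z hB)
    rw [hv] at hE1
    rw [pZ_high (cyl_of_smoothJet (smoothJet_of_smoothZ hF)) (show k < j+1 by omega) x t z,
      Nat.add_sub_cancel] at hE1
    have hPj := hP_box j (by omega) x t z hB
    have haj : pZ j a x t z = 0 := by
      have hprod : pZ j a x t z * (f11 x t z * f22 x t z - η * f12 x t z) = 0 := by
        linear_combination (-η) * hE1 + (f22 x t z) * hPj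
      exact (mul_eq_zero.mp hprod).resolve_right (hΔ12 x t z)
    rw [haj, mul_zero, zero_add] at hPj
    have hbj : pZ j b x t z = 0 := (mul_eq_zero.mp hPj).resolve_left hη
    have hRj := hR_box j (by omega) x t z hB
    rw [hbj, mul_zero, zero_add] at hRj
    have hcj : pZ j c x t z = 0 := (mul_eq_zero.mp hRj).resolve_left hη
    exact ⟨haj, hbj, hcj⟩
  -- box-wide vanishing at level k
  have hvka : ∀ x t z, InB x t z → pZ k a x t z = 0 := by
    intro x t z hB
    by_cases hkl : k ≤ l
    · exact (hstepA k le_rfl hkl x t z hB).1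
    · exact pZ_high (cyl_of_smoothJet ha) (by omega) x t z
  have hvkb : ∀ x t z, InB x t z → pZ k b x t z = 0 := by
    intro x t z hB
    by_cases hkl : k ≤ l
    · exact (hstepA k le_rfl hkl x t z hB).2.1
    · exact pZ_high (cyl_of_smoothJet hb) (by omega) x t z
  have hvkc : ∀ x t z, InB x t z → pZ k c x t z = 0 := by
    intro x t z hB
    by_cases hkl : k ≤ l
    · exact (hstepA k le_rfl hkl x t z hB).2.2
    · exact pZ_high (cyl_of_smoothJet hc) (by omega) x t z
  -- the boundary extraction : f11' = 0 on the box
  have hlam0 : ∀ x t z, InB x t z → pZ 0 f11 x t z = 0 := by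
    intro x t z hB
    have hE1 : pZ k (fun x t z => F x t z * pZ 0 f11 x t z * a x t z
        + f12 x t z * DXF l a x t z + f22 x t z * DXF l b x t z
        + 2 * b x t z * (f11 x t z * f32 x t z - f31 x t z * f12 x t z)
        - (a x t z - c x t z) * (η * f32 x t z - f31 x t z * f22 x t z)) x t z = 0 := by
      show deriv _ _ = 0
      by_cases hkl : k ≤ l
      · apply deriv_local_const (C := 0) isOpen_Ioo (hmemIoo x t z hB k hkl)
        intro s hs
        have hsd : |s - z₀ k| < δ := by
          rw [abs_lt]; obtain ⟨h1, h2⟩ := hs; constructor <;> linarith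
        exact hH1 x t _ (hupdZ x t z hB k s (fun _ => hsd))
      · apply deriv_local_const (C := 0) isOpen_univ (Set.mem_univ _)
        intro s _
        exact hH1 x t _ (hupdZ x t z hB k s (fun hcontra => absurd hcontra hkl))
    have hv1 := pZ_H1_eval (η := η) hk hF hf11 hf31 hf12 hf32 hf22 ha hb hc
      (m := k) le_rfl x t z (hvka x t z hB) (hvkb x t z hB) (hvkc x t z hB)
      (hDXFv a ha k (by omega) hvka x t z hB)
      (hDXFv b hb k (by omega) hvkb x t z hB)
    rw [hv1] at hE1
    have hE2 : pZ k (fun x t z => F x t z * pZ 0 f11 x t z * (Sval + η * b x t z)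
        + η * f12 x t z * DXF l b x t z + η * f22 x t z * DXF l c x t z
        - η * (a x t z - c x t z) * (f11 x t z * f32 x t z - f31 x t z * f12 x t z)
        - 2 * η * b x t z * (η * f32 x t z - f31 x t z * f22 x t z)) x t z = 0 := by
      show deriv _ _ = 0
      by_cases hkl : k ≤ l
      · apply deriv_local_const (C := 0) isOpen_Ioo (hmemIoo x t z hB k hkl)
        intro s hs
        have hsd : |s - z₀ k| < δ := by
          rw [abs_lt]; obtain ⟨h1, h2⟩ := hs; constructor <;> linarith
        exact hH2 x t _ (hupdZ x t z hB k s (fun _ => hsd))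
      · apply deriv_local_const (C := 0) isOpen_univ (Set.mem_univ _)
        intro s _
        exact hH2 x t _ (hupdZ x t z hB k s (fun hcontra => absurd hcontra hkl))
    have hv2 := pZ_H2_eval (η := η) hk Sval hF hf11 hf31 hf12 hf32 hf22 ha hb hc
      (m := k) le_rfl x t z (hvka x t z hB) (hvkb x t z hB) (hvkc x t z hB)
      (hDXFv b hb k (by omega) hvkb x t z hB)
      (hDXFv c hc k (by omega) hvkc x t z hB)
    rw [hv2] at hE2
    have hPk1 := hP_box (k-1) (by omega) x t z hB
    have hRk1 := hR_box (k-1) (by omega) x t z hB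
    have hS := hSconst x t z hB
    have hfin : η * pZ k F x t z * pZ 0 f11 x t z * (2 * Sval) = 0 := by
      linear_combination η * hE2 + (f11 x t z) * η * hE1 - η * (f12 x t z) * hPk1
        - η * (f22 x t z) * hRk1 - η * (pZ k F x t z) * (pZ 0 f11 x t z) * hS
    by_contra hL
    have h2S : (2:ℝ) * Sval ≠ 0 := fun h0 => hSvne (by linarith)
    exact (mul_ne_zero (mul_ne_zero (mul_ne_zero hη (hFzk x t z)) hL) h2S) hfin
  -- f31 vanishes on the box
  have hf31z : ∀ x t z, InB x t z → f31 x t z = 0 := by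
    intro x t z hB
    have h2 := hF2 x t z
    rw [hlam0 x t z hB, mul_zero] at h2
    rcases mul_eq_zero.mp h2.symm with h | h
    · exact h
    · exact absurd h (hF1 x t z)
  -- contradiction with hF1 at the center of the box
  have hfinal : pZ 0 f31 x₀ t₀ z₀ = 0 := by
    show deriv _ _ = 0
    apply deriv_local_const (C := 0) isOpen_Ioo (hmemIoo x₀ t₀ z₀ hcenter 0 (by omega))
    intro s hs
    have hsd : |s - z₀ 0| < δ := by
      rw [abs_lt]; obtain ⟨h1, h2⟩ := hs; constructor <;> linarith
    exact hf31z x₀ t₀ _ (hupdZ x₀ t₀ z₀ hcenter 0 s (fun _ => hsd))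
  exact hF1 x₀ t₀ z₀ hfinal

end S3

section S4

variable {k : ℕ} {η : ℝ} {F f11 f31 f12 f22 f32 : JetFun}

theorem aux (hk : 3 ≤ k) (hη : η ≠ 0)
    (hF : SmoothZ k F) (hFzk : ∀ x t z, pZ k F x t z ≠ 0)
    (hf11 : SmoothZ 0 f11) (hf31 : SmoothZ 0 f31)
    (hf12 : SmoothZ (k - 1) f12) (hf32 : SmoothZ (k - 1) f32)
    (hf22 : SmoothZ (k - 2) f22)
    (hΔ12 : ∀ x t z, f11 x t z * f22 x t z - η * f12 x t z ≠ 0)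
    (hstruct1 : ∀ x t z, DT F f11 x t z - DX f12 x t z
      = η * f32 x t z - f31 x t z * f22 x t z)
    (hstruct2 : ∀ x t z, DX f22 x t z
      = f11 x t z * f32 x t z - f31 x t z * f12 x t z)
    (hstruct3 : ∀ x t z, DT F f31 x t z - DX f32 x t z
      = -(f11 x t z * f22 x t z - η * f12 x t z)) :
    ∀ l (a b c : JetFun), SmoothJet l a → SmoothJet l b → SmoothJet l c →
    (∀ x t z, a x t z * c x t z - (b x t z) ^ 2 = -1) →
    (∀ x t z,
      f11 x t z * DT F a x t z + η * DT F b x t z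
        - f12 x t z * DX a x t z - f22 x t z * DX b x t z
        - 2 * b x t z * (f11 x t z * f32 x t z - f31 x t z * f12 x t z)
        + (a x t z - c x t z) * (η * f32 x t z - f31 x t z * f22 x t z) = 0) →
    (∀ x t z,
      f11 x t z * DT F b x t z + η * DT F c x t z
        - f12 x t z * DX b x t z - f22 x t z * DX c x t z
        + (a x t z - c x t z) * (f11 x t z * f32 x t z - f31 x t z * f12 x t z)
        + 2 * b x t z * (η * f32 x t z - f31 x t z * f22 x t z) = 0) →
    ∀ i ≤ l, ∀ x t z,
      pZ i a x t z = 0 ∧ pZ i b x t z = 0 ∧ pZ i c x t z = 0 := by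
  obtain ⟨hF1, hF2⟩ := cheap hk hη hF hf11 hf31 hf12 hf32 hf22 hΔ12
    hstruct1 hstruct2 hstruct3
  intro l
  induction l using Nat.strong_induction_on with
  | _ l IHl =>
  intro a b c ha hb hc hG h1 h2
  have hbandl := band hk hη hF hFzk hf11 hf31 hf12 hf32 hf22 ha hb hc h1 h2
  have hvan : ∀ j, l + 2 ≤ k + j → j ≤ l → ∀ x t z,
      pZ j a x t z = 0 ∧ pZ j b x t z = 0 ∧ pZ j c x t z = 0 := by
    intro j hjk hjl
    have hva : ∀ x t z, pZ j a x t z = 0 :=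
      box_vanish hk hη hF hFzk hf11 hf31 hf12 hf32 hf22 hF1 hF2 hΔ12
        ha hb hc hG h1 h2 hbandl hjk hjl
    intro x t z
    have hP := (hbandl j hjk hjl x t z).1
    have hR := (hbandl j hjk hjl x t z).2
    rw [hva x t z, mul_zero, zero_add] at hP
    have hvb : pZ j b x t z = 0 := (mul_eq_zero.mp hP).resolve_left hη
    rw [hvb, mul_zero, zero_add] at hR
    exact ⟨hva x t z, hvb, (mul_eq_zero.mp hR).resolve_left hη⟩
  by_cases hcase : l + 2 ≤ k
  · intro i hil x t z
    exact hvan i (by omega) hil x t z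
  · push_neg at hcase
    set m := l + 1 - k with hm
    have hmlt : m < l := by omega
    have hra : SmoothJet m a :=
      sj_reduce ha (by omega) (fun j hj1 hj2 x t z => (hvan j (by omega) hj2 x t z).1)
    have hrb : SmoothJet m b :=
      sj_reduce hb (by omega) (fun j hj1 hj2 x t z => (hvan j (by omega) hj2 x t z).2.1)
    have hrc : SmoothJet m c :=
      sj_reduce hc (by omega) (fun j hj1 hj2 x t z => (hvan j (by omega) hj2 x t z).2.2)
    have IH := IHl m hmlt a b c hra hrb hrc hG h1 h2
    intro i hil x t z
    by_cases him : i ≤ m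
    · exact IH i him x t z
    · exact hvan i (by omega) hil x t z

end S4

end Main

/-- main theorem: for a `k`-th order (`k ≥ 3`) evolution equation
`u_t = F(z₀,…,z_k)` describing `η`-pseudo-spherical surfaces, any coefficients `a`, `b`, `c`
of a second fundamental form depending on a jet of finite order are universal: they depend
only on `x` and `t`. -/
theorem universal_second_fundamental_form
    (k l : ℕ) (hk : 3 ≤ k) (η : ℝ) (hη : η ≠ 0)
    (F f11 f31 f12 f22 f32 a b c : JetFun)
    (hF : SmoothZ k F)
    (hFzk : ∀ x t z, pZ k F x t z ≠ 0)
    (hf11 : SmoothZ 0 f11) (hf31 : SmoothZ 0 f31)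
    (hreg : ∀ x t z, (pZ 0 f11 x t z) ^ 2 + (pZ 0 f31 x t z) ^ 2 ≠ 0)
    (hf12 : SmoothZ (k - 1) f12) (hf32 : SmoothZ (k - 1) f32)
    (hf22 : SmoothZ (k - 2) f22)
    (hΔ12 : ∀ x t z, f11 x t z * f22 x t z - η * f12 x t z ≠ 0)
    (hstruct1 : ∀ x t z, DT F f11 x t z - DX f12 x t z
      = η * f32 x t z - f31 x t z * f22 x t z)
    (hstruct2 : ∀ x t z, DX f22 x t z
      = f11 x t z * f32 x t z - f31 x t z * f12 x t z)
    (hstruct3 : ∀ x t z, DT F f31 x t z - DX f32 x t z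
      = -(f11 x t z * f22 x t z - η * f12 x t z))
    (ha : SmoothJet l a) (hb : SmoothJet l b) (hc : SmoothJet l c)
    (hGauss : ∀ x t z, a x t z * c x t z - (b x t z) ^ 2 = -1)
    (hCod1 : ∀ x t z,
      f11 x t z * DT F a x t z + η * DT F b x t z
        - f12 x t z * DX a x t z - f22 x t z * DX b x t z
        - 2 * b x t z * (f11 x t z * f32 x t z - f31 x t z * f12 x t z)
        + (a x t z - c x t z) * (η * f32 x t z - f31 x t z * f22 x t z) = 0)
    (hCod2 : ∀ x t z,
      f11 x t z * DT F b x t z + η * DT F c x t z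
        - f12 x t z * DX b x t z - f22 x t z * DX c x t z
        + (a x t z - c x t z) * (f11 x t z * f32 x t z - f31 x t z * f12 x t z)
        + 2 * b x t z * (η * f32 x t z - f31 x t z * f22 x t z) = 0) :
    ∀ i ≤ l, ∀ x t z,
      pZ i a x t z = 0 ∧ pZ i b x t z = 0 ∧ pZ i c x t z = 0 := by
  exact Main.aux hk hη hF hFzk hf11 hf31 hf12 hf32 hf22 hΔ12 hstruct1 hstruct2 hstruct3
    l a b c ha hb hc hGauss hCod1 hCod2
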